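/- arXiv:1306.2195 — 10 statements merged into one kernel-verified Lean document; each statement's English description precedes it below -/
import Mathlib

section
/- For every purely imaginary unit quaternion n (re n = 0, ‖n‖ = 1), every angle α ∈ ℝ, and every purely imaginary quaternion w, writing q = exp((α/2) • n), w⊥ = ⟪w, n⟫ • n and w∥ = w − w⊥, the product of the conjugate of the rotated vector with the original vector decomposes as star (q * w * star q) * w = ((Real.cos α * ‖w∥‖² + ‖w⊥‖²) : ℝ) + (Real.sin α * ‖w∥‖²) • n + (((1 - Real.cos α) : ℍ) - Real.sin α • n) * (w∥ * w⊥), i.e. it equals the rotor of angle α about n scaled by ‖w∥‖², plus ‖w⊥‖², plus a cross term proportional to w∥ * w⊥. -/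
set_option linter.unnecessarySeqFocus false

open Quaternion

theorem exp_smul_im (n : ℍ[ℝ]) (hn_re : n.re = 0) (hn_norm : ‖n‖ = 1) (t : ℝ) :
    NormedSpace.exp (t • n) = ((Real.cos t : ℝ) : ℍ[ℝ]) + Real.sin t • n := by
  have hre : (t • n).re = 0 := by simp [hn_re]
  rw [Quaternion.exp_of_re_eq_zero _ hre]
  have hnorm : ‖t • n‖ = |t| := by simp [norm_smul, hn_norm]
  rw [hnorm]
  rcases eq_or_ne t 0 with h | h
  · simp [h]
  · have h1 : Real.cos |t| = Real.cos t := by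
      rcases abs_cases t with ⟨h2, _⟩ | ⟨h2, _⟩ <;> rw [h2] <;> simp
    have h2 : Real.sin |t| / |t| = Real.sin t / t := by
      rcases abs_cases t with ⟨h2, _⟩ | ⟨h2, _⟩ <;> rw [h2] <;> simp
    rw [h1, h2, smul_smul, div_mul_cancel₀ _ h]

theorem rotated_times_original_decomposition
    (n : ℍ[ℝ]) (hn_re : n.re = 0) (hn_norm : ‖n‖ = 1)
    (α : ℝ) (w : ℍ[ℝ]) (hw : w.re = 0) :
    star (NormedSpace.exp ((α / 2) • n) * w
        * star (NormedSpace.exp ((α / 2) • n))) * w =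
      ((Real.cos α * ‖w - (inner ℝ w n : ℝ) • n‖ ^ 2
          + ‖(inner ℝ w n : ℝ) • n‖ ^ 2 : ℝ) : ℍ[ℝ])
        + (Real.sin α * ‖w - (inner ℝ w n : ℝ) • n‖ ^ 2) • n
        + (((1 - Real.cos α : ℝ) : ℍ[ℝ]) - Real.sin α • n)
            * ((w - (inner ℝ w n : ℝ) • n) * ((inner ℝ w n : ℝ) • n)) := by
  rw [exp_smul_im n hn_re hn_norm (α / 2)]
  set c := Real.cos (α / 2) with hc
  set s := Real.sin (α / 2) with hs
  have hcs : s ^ 2 + c ^ 2 = 1 := Real.sin_sq_add_cos_sq _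
  have h2 : 2 * (α / 2) = α := by ring
  have hcosα : Real.cos α = c ^ 2 - s ^ 2 := by
    rw [hc, hs, ← Real.cos_two_mul', h2]
  have hsinα : Real.sin α = 2 * s * c := by
    rw [hc, hs, ← Real.sin_two_mul, h2]
  set β : ℝ := (inner ℝ w n : ℝ) with hβ
  set a : ℍ[ℝ] := w - β • n with ha
  have hw_eq : w = a + β • n := by rw [ha, sub_add_cancel]
  have hstarn : star n = -n := Quaternion.star_eq_neg.2 hn_re
  have ha_re : a.re = 0 := by simp [ha, hw, hn_re]
  have hstara : star a = -a := Quaternion.star_eq_neg.2 ha_re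
  have hnormsq : normSq n = 1 := by
    rw [Quaternion.normSq_eq_norm_mul_self, hn_norm]; ring
  have hnn : n * n = -1 := by
    have h := Quaternion.star_mul_self n
    rw [hstarn, hnormsq, neg_mul] at h
    simpa using neg_eq_iff_eq_neg.mp h
  have hinner_an : (inner ℝ a n : ℝ) = 0 := by
    rw [ha, inner_sub_left, real_inner_smul_left, real_inner_self_eq_norm_sq, hn_norm]
    simp [hβ]
  have han_re : (a * n).re = 0 := by
    have : (inner ℝ a n : ℝ) = (a * star n).re := Quaternion.inner_def a n
    rw [hstarn, mul_neg, Quaternion.re_neg] at this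
    rw [← neg_eq_zero, ← this, hinner_an]
  have han : a * n = -(n * a) := by
    have h1 : star (a * n) = -(a * n) := Quaternion.star_eq_neg.2 han_re
    rw [star_mul, hstarn, hstara, neg_mul, mul_neg, neg_neg] at h1
    rw [h1, neg_neg]
  have hK : normSq a = ‖a‖ ^ 2 := by
    rw [Quaternion.normSq_eq_norm_mul_self]; ring
  have haa : a * a = -((‖a‖ ^ 2 : ℝ) : ℍ[ℝ]) := by
    have h := Quaternion.star_mul_self a
    rw [hstara, neg_mul, hK] at h
    simpa using neg_eq_iff_eq_neg.mp h
  -- rewrite rules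
  have r1 : ∀ x : ℍ[ℝ], n * (n * x) = -x := fun x => by
    rw [← mul_assoc, hnn, neg_one_mul]
  have r3 : ∀ x : ℍ[ℝ], a * (n * x) = -(n * (a * x)) := fun x => by
    rw [← mul_assoc, han, neg_mul, mul_assoc]
  have r5 : ∀ x : ℍ[ℝ], a * (a * x) = -((‖a‖ ^ 2 : ℝ) • x) := fun x => by
    rw [← mul_assoc, haa, ← Quaternion.coe_neg, Quaternion.coe_mul_eq_smul, neg_smul]
  have hcoe : ∀ r : ℝ, ((r : ℝ) : ℍ[ℝ]) = r • (1 : ℍ[ℝ]) := fun r => by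
    rw [← mul_one ((r : ℝ) : ℍ[ℝ]), Quaternion.coe_mul_eq_smul]
  have hbn : ‖β • n‖ ^ 2 = β ^ 2 := by
    rw [norm_smul, hn_norm]; simp [sq_abs, mul_pow]
  rw [hbn]
  clear_value c s β a
  conv_lhs => rw [hw_eq]
  simp only [star_mul, star_add, Quaternion.star_smul, hstarn, hstara,
    Quaternion.star_coe, star_one, star_neg, mul_add, add_mul, sub_mul, mul_sub,
    neg_mul, mul_neg, neg_neg, smul_mul_assoc, mul_smul_comm, smul_smul,
    Quaternion.coe_mul_eq_smul, Quaternion.mul_coe_eq_smul, one_mul, mul_one,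
    smul_add, smul_neg, neg_add_rev, mul_assoc, r1, r3, r5, hnn, han, haa,
    neg_smul, smul_sub, sub_smul, add_smul, hcoe]
  simp only [hcosα, hsinα]
  match_scalars
  · linear_combination (β ^ 2) * hcs
  · ring
  · linear_combination (-β) * hcs
  · ring
end

section
/- Let v : ℝ^m → ℍ be a measurable, square integrable vector field (re (v x) = 0 for all x and ∫ ‖v x‖² dx < ∞), n a purely imaginary unit quaternion, α ∈ ℝ, q = exp((α/2) • n), and let C = ∫ star (q * v x * star q) * v x dx be the geometric cross correlation of the rotated field with the original at the origin. Then the scalar part of C satisfies re C = Real.cos α * (∫ ‖v∥ x‖² dx) + ∫ ‖v⊥ x‖² dx, where v⊥ x = ⟪v x, n⟫ • n and v∥ x = v x − v⊥ x. -/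
open Quaternion MeasureTheory

noncomputable instance : MeasurableSpace ℍ[ℝ] := borel _
instance : BorelSpace ℍ[ℝ] := ⟨rfl⟩

lemma quat_exp_smul (t : ℝ) (n : ℍ[ℝ]) (hn : n.re = 0) (h1 : ‖n‖ = 1) :
    NormedSpace.exp (t • n) = ((Real.cos t : ℝ) : ℍ[ℝ]) + Real.sin t • n := by
  rcases eq_or_ne t 0 with rfl | ht
  · simp
  · rw [Quaternion.exp_of_re_eq_zero _ (by simp [Quaternion.re_smul, hn])]
    rw [norm_smul, h1, mul_one, Real.norm_eq_abs, Real.cos_abs, smul_smul]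
    congr 2
    rcases abs_cases t with ⟨h, _⟩ | ⟨h, _⟩
    · rw [h]; field_simp
    · rw [h, Real.sin_neg]; field_simp

lemma quat_key (c s co : ℝ) (hcs : c ^ 2 + s ^ 2 = 1) (hco : co = c ^ 2 - s ^ 2)
    (n v : ℍ[ℝ]) (hn : n.re = 0)
    (hn1 : n.imI ^ 2 + n.imJ ^ 2 + n.imK ^ 2 = 1)
    (hv : v.re = 0) :
    (star (((c : ℍ[ℝ]) + s • n) * v * star ((c : ℍ[ℝ]) + s • n)) * v).re
      = co * ‖v - (inner ℝ v n : ℝ) • n‖ ^ 2 + ‖(inner ℝ v n : ℝ) • n‖ ^ 2 := by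
  subst hco
  have hns : ∀ x : ℍ[ℝ], ‖x‖ ^ 2 = Quaternion.normSq x := fun x => by
    rw [sq, ← Quaternion.normSq_eq_norm_mul_self]
  have hinner : (inner ℝ v n : ℝ)
      = v.imI * n.imI + v.imJ * n.imJ + v.imK * n.imK := by
    simp [Quaternion.inner_def, Quaternion.re_mul, hv, hn]
  simp only [hns, Quaternion.normSq_def', hinner, Quaternion.re_mul,
    Quaternion.imI_mul, Quaternion.imJ_mul, Quaternion.imK_mul,
    Quaternion.re_add, Quaternion.imI_add, Quaternion.imJ_add, Quaternion.imK_add,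
    Quaternion.re_sub, Quaternion.imI_sub, Quaternion.imJ_sub, Quaternion.imK_sub,
    Quaternion.re_star, Quaternion.imI_star, Quaternion.imJ_star, Quaternion.imK_star,
    Quaternion.re_smul, Quaternion.imI_smul, Quaternion.imJ_smul, Quaternion.imK_smul,
    Quaternion.re_coe, Quaternion.imI_coe, Quaternion.imJ_coe, Quaternion.imK_coe,
    smul_eq_mul, hv, hn]
  set n1 := n.imI; set n2 := n.imJ; set n3 := n.imK
  set v1 := v.imI; set v2 := v.imJ; set v3 := v.imK
  linear_combination
    ((-1)*v1^2 + (-1)*n3^2*v3^2 + (-2)*n2*n3*v2*v3 + (-1)*n2^2*v2^2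
      + (-2)*n1*n3*v1*v3 + (-2)*n1*n2*v1*v2 + (-1)*n1^2*v1^2 + (-1)*s^2*v3^2
      + (-1)*s^2*v2^2 + s^2*n3^2*v3^2 + 2*s^2*n2*n3*v2*v3 + s^2*n2^2*v2^2
      + 2*s^2*n1*n3*v1*v3 + 2*s^2*n1*n2*v1*v2 + s^2*n1^2*v1^2 + c^2*v1^2
      + (-1)*c^2*n3^2*v3^2 + (-2)*c^2*n2*n3*v2*v3 + (-1)*c^2*n2^2*v2^2
      + (-2)*c^2*n1*n3*v1*v3 + (-2)*c^2*n1*n2*v1*v2 + (-1)*c^2*n1^2*v1^2) * hn1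
    + (v1^2 + n3^2*v3^2 + (-1)*n3^2*v1^2 + 2*n2*n3*v2*v3 + n2^2*v2^2
      + (-1)*n2^2*v1^2 + 2*n1*n3*v1*v3 + 2*n1*n2*v1*v2) * hcs

noncomputable def quatReCLM : ℍ[ℝ] →L[ℝ] ℝ :=
  LinearMap.toContinuousLinearMap (QuaternionAlgebra.reₗ (-1 : ℝ) (0 : ℝ) (-1 : ℝ))

theorem correlation_scalar_part
    {m : ℕ} (v : EuclideanSpace ℝ (Fin m) → ℍ[ℝ])
    (hmeas : Measurable v)
    (hre : ∀ x, (v x).re = 0)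
    (hsq : Integrable (fun x => ‖v x‖ ^ 2))
    (n : ℍ[ℝ]) (hn_re : n.re = 0) (hn_norm : ‖n‖ = 1)
    (α : ℝ) :
    (∫ x, star (NormedSpace.exp ((α / 2) • n) * v x
          * star (NormedSpace.exp ((α / 2) • n))) * v x).re =
      Real.cos α * (∫ x, ‖v x - (inner ℝ (v x) n : ℝ) • n‖ ^ 2)
        + ∫ x, ‖(inner ℝ (v x) n : ℝ) • n‖ ^ 2 := by
  set q : ℍ[ℝ] := NormedSpace.exp ((α / 2) • n) with hqdef
  have hq : q = ((Real.cos (α / 2) : ℝ) : ℍ[ℝ]) + Real.sin (α / 2) • n :=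
    quat_exp_smul _ n hn_re hn_norm
  have hcs : Real.cos (α / 2) ^ 2 + Real.sin (α / 2) ^ 2 = 1 := by
    rw [add_comm]; exact Real.sin_sq_add_cos_sq _
  have hco : Real.cos α = Real.cos (α / 2) ^ 2 - Real.sin (α / 2) ^ 2 := by
    have h := Real.cos_two_mul (α / 2)
    rw [show 2 * (α / 2) = α by ring] at h
    nlinarith [Real.sin_sq_add_cos_sq (α / 2)]
  have hn1 : n.imI ^ 2 + n.imJ ^ 2 + n.imK ^ 2 = 1 := by
    have : ‖n‖ ^ 2 = Quaternion.normSq n := by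
      rw [sq, ← Quaternion.normSq_eq_norm_mul_self]
    rw [hn_norm] at this
    simp only [Quaternion.normSq_def', hn_re] at this
    nlinarith [this]
  have hkey : ∀ x, (star (q * v x * star q) * v x).re
      = Real.cos α * ‖v x - (inner ℝ (v x) n : ℝ) • n‖ ^ 2
        + ‖(inner ℝ (v x) n : ℝ) • n‖ ^ 2 := fun x => by
    rw [hq]
    exact quat_key _ _ _ hcs hco n (v x) hn_re hn1 (hre x)
  -- integrability
  have hFc : Continuous fun w : ℍ[ℝ] => star (q * w * star q) * w := by
    fun_prop
  have hF_meas : AEStronglyMeasurable (fun x => star (q * v x * star q) * v x)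
      (volume : Measure (EuclideanSpace ℝ (Fin m))) :=
    (hFc.measurable.comp hmeas).aestronglyMeasurable
  have hF : Integrable (fun x => star (q * v x * star q) * v x) := by
    refine (hsq.const_mul (‖q‖ ^ 2)).mono' hF_meas (Filter.Eventually.of_forall fun x => ?_)
    rw [norm_mul, Quaternion.norm_star, norm_mul, norm_mul, Quaternion.norm_star]
    exact le_of_eq (by ring)
  have habs : ∀ x, |(inner ℝ (v x) n : ℝ)| ≤ ‖v x‖ := fun x => by
    calc |(inner ℝ (v x) n : ℝ)| ≤ ‖v x‖ * ‖n‖ := abs_real_inner_le_norm _ _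
      _ = ‖v x‖ := by rw [hn_norm, mul_one]
  have hpar : Integrable (fun x => ‖v x - (inner ℝ (v x) n : ℝ) • n‖ ^ 2) := by
    have hc : Continuous fun w : ℍ[ℝ] => ‖w - (inner ℝ w n : ℝ) • n‖ ^ 2 :=
      ((continuous_id.sub ((continuous_id.inner (𝕜 := ℝ) continuous_const).smul
        continuous_const)).norm.pow 2)
    refine (hsq.const_mul 4).mono' ((hc.measurable.comp hmeas).aestronglyMeasurable)
      (Filter.Eventually.of_forall fun x => ?_)
    rw [Real.norm_eq_abs, abs_of_nonneg (by positivity)]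
    have h1 : ‖v x - (inner ℝ (v x) n : ℝ) • n‖ ≤ 2 * ‖v x‖ := by
      calc ‖v x - (inner ℝ (v x) n : ℝ) • n‖
          ≤ ‖v x‖ + ‖(inner ℝ (v x) n : ℝ) • n‖ := norm_sub_le _ _
        _ ≤ 2 * ‖v x‖ := by
            rw [norm_smul, hn_norm, mul_one, Real.norm_eq_abs]
            have := habs x; linarith
    nlinarith [norm_nonneg (v x), norm_nonneg (v x - (inner ℝ (v x) n : ℝ) • n)]
  have hperp : Integrable (fun x => ‖(inner ℝ (v x) n : ℝ) • n‖ ^ 2) := by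
    have hc : Continuous fun w : ℍ[ℝ] => ‖(inner ℝ w n : ℝ) • n‖ ^ 2 :=
      (((continuous_id.inner (𝕜 := ℝ) continuous_const).smul continuous_const).norm.pow 2)
    refine hsq.mono' ((hc.measurable.comp hmeas).aestronglyMeasurable)
      (Filter.Eventually.of_forall fun x => ?_)
    rw [Real.norm_eq_abs, abs_of_nonneg (by positivity), norm_smul, hn_norm, mul_one,
      Real.norm_eq_abs]
    have := habs x
    nlinarith [abs_nonneg (inner ℝ (v x) n : ℝ), norm_nonneg (v x)]
  have hre_int : (∫ x, star (q * v x * star q) * v x).re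
      = ∫ x, (star (q * v x * star q) * v x).re := by
    exact (quatReCLM.integral_comp_comm hF).symm
  rw [hre_int]
  rw [show (fun x => (star (q * v x * star q) * v x).re)
      = fun x => Real.cos α * ‖v x - (inner ℝ (v x) n : ℝ) • n‖ ^ 2
        + ‖(inner ℝ (v x) n : ℝ) • n‖ ^ 2 from funext hkey]
  rw [integral_add (hpar.const_mul _) hperp, integral_const_mul]
end

section
/- Let v : ℝ^m → ℍ be a measurable, square integrable vector field (re (v x) = 0 for all x and ∫ ‖v x‖² dx < ∞), n a purely imaginary unit quaternion, α ∈ ℝ, q = exp((α/2) • n), and let C = ∫ star (q * v x * star q) * v x dx. Then the squared norm of the bivector part of C satisfies ‖im C‖² = (Real.sin α)² * (∫ ‖v∥ x‖² dx)² + (2 - 2 * Real.cos α) * ‖∫ (v∥ x) * (v⊥ x) dx‖², where v⊥ x = ⟪v x, n⟫ • n and v∥ x = v x − v⊥ x. -/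
open Quaternion MeasureTheory

noncomputable instance : SecondCountableTopology ℍ[ℝ] :=
  Quaternion.linearIsometryEquivTuple.toContinuousLinearEquiv.toHomeomorph.isEmbedding.secondCountableTopology

section helpers

lemma imag_mul_self' (x : ℍ[ℝ]) (hx : x.re = 0) : x * x = ((-(‖x‖^2) : ℝ) : ℍ[ℝ]) := by
  have h1 : star x = -x := Quaternion.star_eq_neg.mpr hx
  have h := Quaternion.self_mul_star (a := x)
  rw [h1, mul_neg, neg_eq_iff_eq_neg] at h
  rw [h, Quaternion.normSq_eq_norm_mul_self]
  push_cast
  rw [sq]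

lemma mul_add_mul_eq' (x y : ℍ[ℝ]) (hx : x.re = 0) (hy : y.re = 0) :
    x * y + y * x = ((-(2 * (inner ℝ x y : ℝ)) : ℝ) : ℍ[ℝ]) := by
  ext <;> simp [Quaternion.inner_def, Quaternion.re_mul, Quaternion.imI_mul, Quaternion.imJ_mul,
    Quaternion.imK_mul, hx, hy] <;> ring

lemma re_mul_comm' (x y : ℍ[ℝ]) : (x * y).re = (y * x).re := by
  rw [Quaternion.re_mul, Quaternion.re_mul]; ring

lemma im_of_re_zero (x : ℍ[ℝ]) (hx : x.re = 0) : x.im = x := by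
  rw [← Quaternion.sub_re_self, hx]
  simp

lemma exp_smul_unit (n : ℍ[ℝ]) (hn_re : n.re = 0) (hn_norm : ‖n‖ = 1) (t : ℝ) :
    NormedSpace.exp (t • n) = ((Real.cos t : ℝ) : ℍ[ℝ]) + (Real.sin t) • n := by
  rcases eq_or_ne t 0 with rfl | ht
  · simp [NormedSpace.exp_zero]
  · rw [Quaternion.exp_of_re_eq_zero _ (by simp [hn_re])]
    rw [norm_smul, hn_norm, mul_one, Real.norm_eq_abs, Real.cos_abs, smul_smul]
    congr 1
    congr 1
    rcases le_or_gt 0 t with h | h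
    · rw [abs_of_nonneg h]; field_simp
    · rw [abs_of_neg h, Real.sin_neg]; field_simp

lemma q_sq (n : ℍ[ℝ]) (hn_re : n.re = 0) (hn1 : ‖n‖ = 1) (c s : ℝ) :
    ((c : ℍ[ℝ]) + s • n) * ((c : ℍ[ℝ]) + s • n)
      = ((c^2 - s^2 : ℝ) : ℍ[ℝ]) + (2*c*s) • n := by
  have hnn : n * n = ((-1 : ℝ) : ℍ[ℝ]) := by
    rw [imag_mul_self' n hn_re, hn1]; norm_num
  rw [add_mul, mul_add, mul_add, smul_mul_assoc, smul_mul_assoc, mul_smul_comm, mul_smul_comm,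
    hnn, Quaternion.coe_mul_eq_smul, Quaternion.smul_coe, Quaternion.smul_coe,
    Quaternion.smul_coe]
  ext <;> simp [← Quaternion.coe_pow] <;> ring

lemma q_mul_star (n : ℍ[ℝ]) (hn_re : n.re = 0) (hn1 : ‖n‖ = 1) (c s : ℝ)
    (hcs : c ^ 2 + s ^ 2 = 1) :
    ((c : ℍ[ℝ]) + s • n) * star ((c : ℍ[ℝ]) + s • n) = 1 := by
  have hnn : n * n = ((-1 : ℝ) : ℍ[ℝ]) := by
    rw [imag_mul_self' n hn_re, hn1]; norm_num
  have hstar : star ((c : ℍ[ℝ]) + s • n) = (c : ℍ[ℝ]) - s • n := by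
    have : star n = -n := Quaternion.star_eq_neg.mpr hn_re
    simp [this, sub_eq_add_neg]
  rw [hstar, add_mul, mul_sub, mul_sub, smul_mul_assoc, smul_mul_assoc, mul_smul_comm,
    mul_smul_comm, hnn, Quaternion.coe_mul_eq_smul, Quaternion.smul_coe, Quaternion.smul_coe,
    Quaternion.smul_coe]
  ext <;> simp [← Quaternion.coe_pow] <;> nlinarith [hcs]

lemma master (q a b : ℍ[ℝ]) (A B : ℝ)
    (hq1 : q * star q = 1)
    (hqa : a * star q = q * a)
    (hqb : q * b = b * q)
    (hsa : star a = -a) (hsb : star b = -b)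
    (haa : a * a = ((-A : ℝ) : ℍ[ℝ])) (hbb : b * b = ((-B : ℝ) : ℍ[ℝ]))
    (hba : b * a = -(a * b)) :
    star (q * (a + b) * star q) * (a + b) =
      (A : ℝ) • (q * q) + ((B : ℝ) : ℍ[ℝ]) + (1 - q * q) * (a * b) := by
  have e1 : star (q * (a + b) * star q) = q * (-(a + b)) * star q := by
    simp only [star_mul, star_star, star_add, hsa, hsb, mul_assoc, neg_add, mul_neg, neg_mul]
  have e2 : q * a * star q = q * q * a := by rw [mul_assoc, hqa, ← mul_assoc]
  have e3 : q * b * star q = b := by rw [hqb, mul_assoc, hq1, mul_one]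
  have e4 : q * (-(a + b)) * star q = -(q * q * a) - b := by
    have : q * (a + b) * star q = q * q * a + b := by
      rw [mul_add, add_mul, e2, e3]
    rw [mul_neg, neg_mul, this]
    abel
  rw [e1, e4]
  have e5 : (-(q * q * a) - b) * (a + b)
      = -(q * q * (a * a)) - q * q * (a * b) - b * a - b * b := by
    simp only [sub_mul, mul_add, neg_mul, mul_assoc]
    abel
  rw [e5, haa, hbb, hba]
  rw [Quaternion.mul_coe_eq_smul]
  push_cast
  rw [sub_mul, one_mul, neg_smul, neg_neg]
  abel

lemma pointwise_key (n : ℍ[ℝ]) (hn_re : n.re = 0) (hn1 : ‖n‖ = 1)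
    (c s : ℝ) (hcs : c ^ 2 + s ^ 2 = 1) (w : ℍ[ℝ]) (hw : w.re = 0) :
    star (((c : ℍ[ℝ]) + s • n) * w * star ((c : ℍ[ℝ]) + s • n)) * w =
      (‖w - (inner ℝ w n : ℝ) • n‖ ^ 2 : ℝ) • (((c : ℍ[ℝ]) + s • n) * ((c : ℍ[ℝ]) + s • n))
      + ((‖((inner ℝ w n : ℝ) • n : ℍ[ℝ])‖ ^ 2 : ℝ) : ℍ[ℝ])
      + (1 - ((c : ℍ[ℝ]) + s • n) * ((c : ℍ[ℝ]) + s • n))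
          * ((w - (inner ℝ w n : ℝ) • n) * ((inner ℝ w n : ℝ) • n)) := by
  set β : ℝ := (inner ℝ w n : ℝ) with hβ
  set b : ℍ[ℝ] := β • n with hbdef
  set a : ℍ[ℝ] := w - b with hadef
  have hw' : w = a + b := by rw [hadef]; abel
  have ha_re : a.re = 0 := by simp [hadef, hbdef, hw, hn_re]
  have hb_re : b.re = 0 := by simp [hbdef, hn_re]
  have hainner : (inner ℝ a n : ℝ) = 0 := by
    rw [hadef, hbdef, inner_sub_left, real_inner_smul_left, real_inner_self_eq_norm_mul_norm,
      hn1]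
    simp [hβ]
  have hna : n * a = -(a * n) := by
    have h := mul_add_mul_eq' a n ha_re hn_re
    rw [hainner] at h
    norm_num at h
    linear_combination (norm := abel_nf) h
  have hstar : star ((c : ℍ[ℝ]) + s • n) = (c : ℍ[ℝ]) - s • n := by
    have : star n = -n := Quaternion.star_eq_neg.mpr hn_re
    simp [this, sub_eq_add_neg]
  have hqa : a * star ((c : ℍ[ℝ]) + s • n) = ((c : ℍ[ℝ]) + s • n) * a := by
    rw [hstar, mul_sub, add_mul, mul_smul_comm, smul_mul_assoc, hna, smul_neg,
      Quaternion.coe_commutes]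
    abel
  have hqn : ((c : ℍ[ℝ]) + s • n) * n = n * ((c : ℍ[ℝ]) + s • n) := by
    rw [add_mul, mul_add, smul_mul_assoc, mul_smul_comm, Quaternion.coe_commutes]
  have hqb : ((c : ℍ[ℝ]) + s • n) * b = b * ((c : ℍ[ℝ]) + s • n) := by
    rw [hbdef, mul_smul_comm, smul_mul_assoc, hqn]
  have hba : b * a = -(a * b) := by
    rw [hbdef, smul_mul_assoc, mul_smul_comm, hna, smul_neg]
  rw [hw']
  exact master _ _ _ (‖a‖^2) (‖b‖^2) (q_mul_star n hn_re hn1 c s hcs) hqa hqb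
    (Quaternion.star_eq_neg.mpr ha_re) (Quaternion.star_eq_neg.mpr hb_re)
    (imag_mul_self' a ha_re) (imag_mul_self' b hb_re) hba

lemma g_re_zero (n : ℍ[ℝ]) (hn_re : n.re = 0) (hn1 : ‖n‖ = 1) (w : ℍ[ℝ]) (hw : w.re = 0) :
    ((w - (inner ℝ w n : ℝ) • n) * ((inner ℝ w n : ℝ) • n)).re = 0 := by
  set β : ℝ := (inner ℝ w n : ℝ) with hβ
  set a : ℍ[ℝ] := w - β • n with hadef
  have ha_re : a.re = 0 := by simp [hadef, hw, hn_re]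
  have hainner : (inner ℝ a n : ℝ) = 0 := by
    rw [hadef, inner_sub_left, real_inner_smul_left, real_inner_self_eq_norm_mul_norm, hn1]
    simp [hβ]
  have h := mul_add_mul_eq' a n ha_re hn_re
  rw [hainner] at h
  have h2 := congrArg QuaternionAlgebra.re h
  simp only [Quaternion.re_add, Quaternion.re_coe] at h2
  have h3 := re_mul_comm' a n
  have h4 : (a * n).re = 0 := by linarith
  rw [mul_smul_comm, Quaternion.re_smul]
  simp [h4]

lemma g_inner_zero (n : ℍ[ℝ]) (hn_re : n.re = 0) (hn1 : ‖n‖ = 1) (w : ℍ[ℝ]) (hw : w.re = 0) :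
    (inner ℝ ((w - (inner ℝ w n : ℝ) • n) * ((inner ℝ w n : ℝ) • n)) n : ℝ) = 0 := by
  set β : ℝ := (inner ℝ w n : ℝ) with hβ
  set a : ℍ[ℝ] := w - β • n with hadef
  have hnn : n * n = ((-1 : ℝ) : ℍ[ℝ]) := by
    rw [imag_mul_self' n hn_re, hn1]; norm_num
  have hstarn : star n = -n := Quaternion.star_eq_neg.mpr hn_re
  rw [Quaternion.inner_def, hstarn, mul_neg, Quaternion.re_neg, mul_assoc,
    smul_mul_assoc, hnn, Quaternion.smul_coe]
  rw [Quaternion.mul_coe_eq_smul, Quaternion.re_smul, hadef]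
  simp [hw, hn_re]

end helpers
set_option maxHeartbeats 1000000

theorem correlation_bivector_part_norm_sq
    {m : ℕ} (v : EuclideanSpace ℝ (Fin m) → ℍ[ℝ])
    (hmeas : Measurable v)
    (hre : ∀ x, (v x).re = 0)
    (hsq : Integrable (fun x => ‖v x‖ ^ 2))
    (n : ℍ[ℝ]) (hn_re : n.re = 0) (hn_norm : ‖n‖ = 1)
    (α : ℝ) :
    ‖(∫ x, star (NormedSpace.exp ((α / 2) • n) * v x
          * star (NormedSpace.exp ((α / 2) • n))) * v x).im‖ ^ 2 =
      (Real.sin α) ^ 2 * (∫ x, ‖v x - (inner ℝ (v x) n : ℝ) • n‖ ^ 2) ^ 2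
        + (2 - 2 * Real.cos α)
            * ‖∫ x, (v x - (inner ℝ (v x) n : ℝ) • n) * ((inner ℝ (v x) n : ℝ) • n)‖ ^ 2 := by
  set c : ℝ := Real.cos (α / 2) with hc
  set s : ℝ := Real.sin (α / 2) with hs
  have hcs : c ^ 2 + s ^ 2 = 1 := by
    rw [hc, hs, add_comm]; exact Real.sin_sq_add_cos_sq _
  have hexp : NormedSpace.exp ((α / 2) • n) = ((c : ℝ) : ℍ[ℝ]) + s • n :=
    exp_smul_unit n hn_re hn_norm _
  -- measurability
  have hβc : Continuous (fun y : ℍ[ℝ] => (inner ℝ y n : ℝ)) :=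
    continuous_id.inner continuous_const
  have hβm : Measurable (fun x => (inner ℝ (v x) n : ℝ)) := hβc.measurable.comp hmeas
  have ham : Measurable (fun x => v x - (inner ℝ (v x) n : ℝ) • n) :=
    hmeas.sub (hβm.smul_const n)
  have hbm : Measurable (fun x => ((inner ℝ (v x) n : ℝ) • n : ℍ[ℝ])) := hβm.smul_const n
  have hgm : Measurable (fun x =>
      (v x - (inner ℝ (v x) n : ℝ) • n) * ((inner ℝ (v x) n : ℝ) • n)) := ham.mul hbm
  -- bounds
  have hble : ∀ x, ‖((inner ℝ (v x) n : ℝ) • n : ℍ[ℝ])‖ ≤ ‖v x‖ := by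
    intro x
    rw [norm_smul, hn_norm, mul_one, Real.norm_eq_abs]
    simpa [hn_norm] using abs_real_inner_le_norm (v x) n
  have hale : ∀ x, ‖v x - (inner ℝ (v x) n : ℝ) • n‖ ≤ 2 * ‖v x‖ := by
    intro x
    refine (norm_sub_le _ _).trans ?_
    have := hble x
    linarith
  -- integrability
  have hPint : Integrable (fun x => ‖v x - (inner ℝ (v x) n : ℝ) • n‖ ^ 2) := by
    refine (hsq.const_mul 4).mono' (ham.norm.pow_const 2).aestronglyMeasurable
      (Filter.Eventually.of_forall fun x => ?_)
    rw [Real.norm_eq_abs, abs_of_nonneg (by positivity)]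
    nlinarith [hale x, norm_nonneg (v x - (inner ℝ (v x) n : ℝ) • n), norm_nonneg (v x)]
  have hTint : Integrable (fun x => ‖((inner ℝ (v x) n : ℝ) • n : ℍ[ℝ])‖ ^ 2) := by
    refine hsq.mono' (hbm.norm.pow_const 2).aestronglyMeasurable
      (Filter.Eventually.of_forall fun x => ?_)
    rw [Real.norm_eq_abs, abs_of_nonneg (by positivity)]
    nlinarith [hble x, norm_nonneg (((inner ℝ (v x) n : ℝ) • n : ℍ[ℝ])), norm_nonneg (v x)]
  have hgint : Integrable (fun x =>
      (v x - (inner ℝ (v x) n : ℝ) • n) * ((inner ℝ (v x) n : ℝ) • n)) := by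
    refine (hsq.const_mul 2).mono' hgm.aestronglyMeasurable
      (Filter.Eventually.of_forall fun x => ?_)
    rw [norm_mul]
    nlinarith [hale x, hble x, norm_nonneg (v x - (inner ℝ (v x) n : ℝ) • n),
      norm_nonneg (((inner ℝ (v x) n : ℝ) • n : ℍ[ℝ])), norm_nonneg (v x)]
  set Q : ℍ[ℝ] := ((c : ℝ) : ℍ[ℝ]) + s • n with hQ
  set S : ℝ := ∫ x, ‖v x - (inner ℝ (v x) n : ℝ) • n‖ ^ 2 with hS
  set T : ℝ := ∫ x, ‖((inner ℝ (v x) n : ℝ) • n : ℍ[ℝ])‖ ^ 2 with hT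
  set M : ℍ[ℝ] := ∫ x, (v x - (inner ℝ (v x) n : ℝ) • n) * ((inner ℝ (v x) n : ℝ) • n) with hM
  -- integral decomposition
  have hcoe : ∀ r : ℝ, ((r : ℍ[ℝ])) = r • (1 : ℍ[ℝ]) := fun r => by
    rw [← Quaternion.coe_mul_eq_smul, mul_one]
  have hC : (∫ x, star (NormedSpace.exp ((α / 2) • n) * v x
          * star (NormedSpace.exp ((α / 2) • n))) * v x)
      = S • (Q * Q) + ((T : ℝ) : ℍ[ℝ]) + (1 - Q * Q) * M := by
    have hrw : (fun x => star (NormedSpace.exp ((α / 2) • n) * v x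
          * star (NormedSpace.exp ((α / 2) • n))) * v x)
        = fun x => (‖v x - (inner ℝ (v x) n : ℝ) • n‖ ^ 2) • (Q * Q)
            + ((‖((inner ℝ (v x) n : ℝ) • n : ℍ[ℝ])‖ ^ 2 : ℝ) : ℍ[ℝ])
            + (1 - Q * Q) * ((v x - (inner ℝ (v x) n : ℝ) • n) * ((inner ℝ (v x) n : ℝ) • n)) :=
      funext fun x => by
        rw [hexp]; exact pointwise_key n hn_re hn_norm c s hcs (v x) (hre x)
    rw [hrw]
    have i1 : Integrable (fun x => (‖v x - (inner ℝ (v x) n : ℝ) • n‖ ^ 2) • (Q * Q)) :=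
      hPint.smul_const _
    have i2 : Integrable (fun x => ((‖((inner ℝ (v x) n : ℝ) • n : ℍ[ℝ])‖ ^ 2 : ℝ) : ℍ[ℝ])) := by
      simp_rw [hcoe]
      exact hTint.smul_const _
    have i3 : Integrable (fun x =>
        (1 - Q * Q) * ((v x - (inner ℝ (v x) n : ℝ) • n) * ((inner ℝ (v x) n : ℝ) • n))) :=
      hgint.const_mul _
    have i12 : Integrable (fun x => (‖v x - (inner ℝ (v x) n : ℝ) • n‖ ^ 2) • (Q * Q)
        + ((‖((inner ℝ (v x) n : ℝ) • n : ℍ[ℝ])‖ ^ 2 : ℝ) : ℍ[ℝ])) := i1.add i2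
    rw [integral_add i12 i3, integral_add i1 i2, integral_smul_const]
    congr 1
    · congr 1
      · simp_rw [hcoe]
        rw [integral_smul_const, ← hcoe]
    · have h := (ContinuousLinearMap.mul ℝ ℍ[ℝ] (1 - Q * Q)).integral_comp_comm hgint
      simp only [ContinuousLinearMap.mul_apply'] at h
      exact h
  -- facts about M
  have hM_re : M.re = 0 := by
    have h := (innerSL ℝ (1 : ℍ[ℝ])).integral_comp_comm hgint
    simp only [innerSL_apply_apply] at h
    have h2 : ∀ x, (inner ℝ (1 : ℍ[ℝ])
        ((v x - (inner ℝ (v x) n : ℝ) • n) * ((inner ℝ (v x) n : ℝ) • n)) : ℝ) = 0 := by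
      intro x
      rw [real_inner_comm, Quaternion.inner_def, star_one, mul_one]
      exact g_re_zero n hn_re hn_norm (v x) (hre x)
    simp only [h2, integral_zero] at h
    have h3 : (inner ℝ (1 : ℍ[ℝ]) M : ℝ) = M.re := by
      rw [real_inner_comm, Quaternion.inner_def, star_one, mul_one]
    rw [← h3, ← h]
  have hMn_inner : (inner ℝ M n : ℝ) = 0 := by
    have h := (innerSL ℝ n).integral_comp_comm hgint
    simp only [innerSL_apply_apply] at h
    have h2 : ∀ x, (inner ℝ n
        ((v x - (inner ℝ (v x) n : ℝ) • n) * ((inner ℝ (v x) n : ℝ) • n)) : ℝ) = 0 := by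
      intro x
      rw [real_inner_comm]
      exact g_inner_zero n hn_re hn_norm (v x) (hre x)
    simp only [h2, integral_zero] at h
    rw [real_inner_comm, ← h]
  have hstarn : star n = -n := Quaternion.star_eq_neg.mpr hn_re
  have hstarM : star M = -M := Quaternion.star_eq_neg.mpr hM_re
  have hMn_re : (M * n).re = 0 := by
    have h := Quaternion.inner_def M n
    rw [hstarn, mul_neg, Quaternion.re_neg] at h
    rw [hMn_inner] at h
    linarith
  have hnM_re : (n * M).re = 0 := by rw [re_mul_comm']; exact hMn_re
  have hnn : n * n = ((-1 : ℝ) : ℍ[ℝ]) := by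
    rw [imag_mul_self' n hn_re, hn_norm]; norm_num
  have hMM : M * M = ((-(‖M‖^2) : ℝ) : ℍ[ℝ]) := imag_mul_self' M hM_re
  -- Q squared
  have hQQ : Q * Q = ((Real.cos α : ℝ) : ℍ[ℝ]) + (Real.sin α) • n := by
    rw [hQ, q_sq n hn_re hn_norm c s]
    have h1 : Real.cos α = c ^ 2 - s ^ 2 := by
      have h := Real.cos_two_mul (α / 2)
      rw [show (2 : ℝ) * (α / 2) = α by ring] at h
      rw [hc, hs]
      nlinarith [hcs, h]
    have h2 : Real.sin α = 2 * c * s := by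
      have h := Real.sin_two_mul (α / 2)
      rw [show (2 : ℝ) * (α / 2) = α by ring] at h
      rw [hc, hs]
      linear_combination h
    rw [h1, h2]
  -- imaginary part
  have hCim : (∫ x, star (NormedSpace.exp ((α / 2) • n) * v x
          * star (NormedSpace.exp ((α / 2) • n))) * v x).im
      = (S * Real.sin α) • n + ((1 - Real.cos α) • M - Real.sin α • (n * M)) := by
    rw [hC, hQQ]
    have e1 : S • (((Real.cos α : ℝ) : ℍ[ℝ]) + Real.sin α • n)
        = ((S * Real.cos α : ℝ) : ℍ[ℝ]) + (S * Real.sin α) • n := by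
      rw [smul_add, smul_smul, Quaternion.smul_coe]
    have e2 : (1 - (((Real.cos α : ℝ) : ℍ[ℝ]) + Real.sin α • n)) * M
        = M - Real.cos α • M - Real.sin α • (n * M) := by
      rw [sub_mul, one_mul, add_mul, Quaternion.coe_mul_eq_smul, smul_mul_assoc]
      abel
    rw [e1, e2]
    have imM := im_of_re_zero M hM_re
    have imn := im_of_re_zero n hn_re
    have imnM := im_of_re_zero (n * M) hnM_re
    simp only [Quaternion.im_add, Quaternion.im_sub, Quaternion.im_smul, Quaternion.im_coe,
      imM, imn, imnM]
    module
  rw [hCim]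
  -- inner product facts
  have k1 : (inner ℝ n M : ℝ) = 0 := by rw [real_inner_comm]; exact hMn_inner
  have hs2 : star (n * M) = M * n := by rw [star_mul, hstarn, hstarM, neg_mul_neg]
  have k2 : (inner ℝ n (n * M) : ℝ) = 0 := by
    rw [Quaternion.inner_def, hs2, re_mul_comm', mul_assoc, hnn, Quaternion.mul_coe_eq_smul,
      Quaternion.re_smul, hM_re]
    simp
  have k3 : (inner ℝ M (n * M) : ℝ) = 0 := by
    rw [Quaternion.inner_def, hs2, ← mul_assoc, hMM, Quaternion.coe_mul_eq_smul,
      Quaternion.re_smul, hn_re]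
    simp
  rw [norm_add_sq_real, norm_sub_sq_real]
  rw [inner_sub_right, real_inner_smul_left, real_inner_smul_left, real_inner_smul_right,
    real_inner_smul_right, real_inner_smul_left, real_inner_smul_right, k1, k2, k3]
  have hnM_norm : ‖n * M‖ = ‖M‖ := by rw [norm_mul, hn_norm, one_mul]
  rw [norm_smul, norm_smul, norm_smul, hnM_norm, hn_norm, Real.norm_eq_abs, Real.norm_eq_abs,
    Real.norm_eq_abs]
  have hpy := Real.sin_sq_add_cos_sq α
  simp only [mul_one, one_mul, mul_zero, zero_mul, sub_zero, add_zero, mul_pow, sq_abs]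
  linear_combination (‖M‖ ^ 2) * hpy
end

section
/- Let v : ℝ^m → ℍ be a measurable, square integrable vector field (re (v x) = 0 for all x) with ∫ ‖v x‖² dx > 0, n a purely imaginary unit quaternion, α ∈ [0, π), q = exp((α/2) • n), and C = ∫ star (q * v x * star q) * v x dx. Then C ≠ 0; i.e., for rotation angles strictly less than π the geometric cross correlation of a nonzero field with its outer-rotated copy never vanishes at the origin. -/
open Quaternion MeasureTheory

lemma re_sandwich (p w : ℍ[ℝ]) :
    (star w * p * w).re = p.re * ‖w‖ ^ 2 := by
  have h : ‖w‖ ^ 2 = normSq w := by rw [sq, ← normSq_eq_norm_mul_self]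
  rw [h]
  simp only [Quaternion.normSq_def', Quaternion.re_mul, Quaternion.imI_mul,
    Quaternion.imJ_mul, Quaternion.imK_mul, Quaternion.re_star, Quaternion.imI_star,
    Quaternion.imJ_star, Quaternion.imK_star]
  ring

noncomputable def reCLM : ℍ[ℝ] →L[ℝ] ℝ :=
  { toLinearMap := QuaternionAlgebra.reₗ _ _ _, cont := Quaternion.continuous_re }

theorem correlation_ne_zero
    {m : ℕ} (v : EuclideanSpace ℝ (Fin m) → ℍ[ℝ])
    (hmeas : Measurable v)
    (hre : ∀ x, (v x).re = 0)
    (hsq : Integrable (fun x => ‖v x‖ ^ 2))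
    (hpos : 0 < ∫ x, ‖v x‖ ^ 2)
    (n : ℍ[ℝ]) (hn_re : n.re = 0) (hn_norm : ‖n‖ = 1)
    (α : ℝ) (hα0 : 0 ≤ α) (hαπ : α < Real.pi) :
    (∫ x, star (NormedSpace.exp ((α / 2) • n) * v x
        * star (NormedSpace.exp ((α / 2) • n))) * v x) ≠ 0 := by
  set q : ℍ[ℝ] := NormedSpace.exp ((α / 2) • n) with hq
  have hren : ((α / 2) • n).re = 0 := by simp [hn_re]
  have hq_norm : ‖q‖ = 1 := by
    rw [hq, Quaternion.norm_exp, hren, NormedSpace.exp_zero, norm_one]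
  have hq_sq : star q * q = 1 := by
    rw [Quaternion.star_mul_self,
      show normSq q = ‖q‖ * ‖q‖ from normSq_eq_norm_mul_self q, hq_norm, one_mul]
    exact Quaternion.coe_one
  have hq_re : q.re = Real.cos (α / 2) := by
    rw [hq, Quaternion.exp_of_re_eq_zero _ hren]
    have h2 : ‖(α / 2) • n‖ = α / 2 := by
      rw [norm_smul, hn_norm, mul_one, Real.norm_eq_abs, abs_of_nonneg (by linarith)]
    simp [h2, hn_re]
  have hq_re_pos : 0 < q.re := by
    rw [hq_re]
    apply Real.cos_pos_of_mem_Ioo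
    constructor
    · linarith [Real.pi_pos]
    · linarith
  set F : EuclideanSpace ℝ (Fin m) → ℍ[ℝ] := fun x => star (q * v x * star q) * v x with hF
  -- pointwise identity
  have key : ∀ x, (star q * F x).re = q.re * ‖v x‖ ^ 2 := by
    intro x
    have h1 : star q * F x = star (v x) * star q * v x := by
      simp only [hF, star_mul, star_star, ← mul_assoc]
      rw [hq_sq, one_mul]
    rw [h1, re_sandwich, Quaternion.re_star]
  -- integrability
  have hcont : Continuous fun w : ℍ[ℝ] => star (q * w * star q) * w :=
    (((continuous_const.mul continuous_id).mul continuous_const).star).mul continuous_id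
  have hFmeas : AEStronglyMeasurable F volume :=
    ((hcont.measurable.comp hmeas)).aestronglyMeasurable
  have hFnorm : ∀ x, ‖F x‖ = ‖v x‖ ^ 2 := by
    intro x
    simp only [hF]
    rw [norm_mul, Quaternion.norm_star, norm_mul, norm_mul, Quaternion.norm_star, hq_norm]
    ring
  have hFint : Integrable F := by
    refine hsq.mono' hFmeas ?_
    filter_upwards with x
    exact (hFnorm x).le
  intro hI
  -- push star q and re through the integral
  have hmul : (∫ x, star q * F x) = star q * ∫ x, F x := by
    exact (ContinuousLinearMap.integral_comp_comm
      (ContinuousLinearMap.mul ℝ ℍ[ℝ] (star q)) hFint)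
  have hmulint : Integrable fun x => star q * F x := hFint.const_mul _
  have hre_int : (∫ x, star q * F x).re = ∫ x, (star q * F x).re := by
    exact (ContinuousLinearMap.integral_comp_comm reCLM hmulint).symm
  have hval : ∫ x, (star q * F x).re = q.re * ∫ x, ‖v x‖ ^ 2 := by
    simp_rw [key]
    exact integral_const_mul q.re _
  rw [hmul, hI, mul_zero] at hre_int
  rw [hval] at hre_int
  have : q.re * ∫ x, ‖v x‖ ^ 2 > 0 := mul_pos hq_re_pos hpos
  simp only [Quaternion.re_zero] at hre_int
  linarith
end

section
/- Let v : ℝ^m → ℍ be a measurable vector field (re (v x) = 0 for all x) with ∫ ‖v x‖² dx = 1, n a purely imaginary unit quaternion, α ∈ [0, π], q = exp((α/2) • n), C = ∫ star (q * v x * star q) * v x dx, and assume im C ≠ 0. Set φ = Real.arccos (re C / ‖C‖), m = ‖im C‖⁻¹ • im C, and let p = Real.cos (φ/2) + Real.sin (φ/2) • m be the half-angle correction rotor. Then the real part of the composed rotor r = star p * q satisfies re r = Real.cos (α/2) * Real.cos (φ/2) + Real.sin (α/2) * Real.sin (φ/2) * Real.sin α * (∫ ‖v∥ x‖² dx) /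 ‖im C‖, where v∥ x = v x − ⟪v x, n⟫ • n. -/
open Quaternion MeasureTheory
open scoped RealInnerProductSpace

lemma key_pointwise (c s : ℝ) (nn w : ℍ[ℝ]) (hn : nn.re = 0) (hw : w.re = 0)
    (hn1 : nn.imI ^ 2 + nn.imJ ^ 2 + nn.imK ^ 2 = 1) :
    ((star (((c : ℍ[ℝ]) + s • nn) * w * star ((c : ℍ[ℝ]) + s • nn)) * w) * nn).re
      = -((2 * s * c) * ‖w - (inner ℝ w nn : ℝ) • nn‖ ^ 2) := by
  rw [← real_inner_self_eq_norm_sq]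
  simp only [inner_def, re_mul, imI_mul, imJ_mul, imK_mul, re_add, imI_add, imJ_add, imK_add,
    re_sub, imI_sub, imJ_sub, imK_sub, re_star, imI_star, imJ_star, imK_star,
    re_coe, imI_coe, imJ_coe, imK_coe, re_smul, imI_smul, imJ_smul, imK_smul,
    smul_eq_mul, hn, hw]
  ring_nf
  linear_combination (2 * c * s * ((nn.imI * w.imI + nn.imJ * w.imJ + nn.imK * w.imK) ^ 2
    - (w.imI ^ 2 + w.imJ ^ 2 + w.imK ^ 2))) * hn1

theorem composed_rotor_scalar_part
    {m : ℕ} (v : EuclideanSpace ℝ (Fin m) → ℍ[ℝ])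
    (hmeas : Measurable v)
    (hre : ∀ x, (v x).re = 0)
    (hnorm : ∫ x, ‖v x‖ ^ 2 = 1)
    (n : ℍ[ℝ]) (hn_re : n.re = 0) (hn_norm : ‖n‖ = 1)
    (α : ℝ) (hα0 : 0 ≤ α) (hαπ : α ≤ Real.pi)
    (q C : ℍ[ℝ])
    (hq : q = NormedSpace.exp ((α / 2) • n))
    (hC : C = ∫ x, star (q * v x * star q) * v x)
    (him : C.im ≠ 0)
    (φ : ℝ) (hφ : φ = Real.arccos (C.re / ‖C‖))
    (p : ℍ[ℝ])
    (hp : p = ((Real.cos (φ / 2) : ℝ) : ℍ[ℝ])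
        + Real.sin (φ / 2) • (‖C.im‖⁻¹ • C.im)) :
    (star p * q).re =
      Real.cos (α / 2) * Real.cos (φ / 2)
        + Real.sin (α / 2) * Real.sin (φ / 2) * Real.sin α
            * (∫ x, ‖v x - (inner ℝ (v x) n : ℝ) • n‖ ^ 2) / ‖C.im‖ := by
  set c := Real.cos (α / 2) with hc
  set s := Real.sin (α / 2) with hs
  -- the rotor in closed form
  have hq' : q = (c : ℍ[ℝ]) + s • n := by
    rw [hq, Quaternion.exp_of_re_eq_zero _ (by simp [hn_re])]
    have hnrm : ‖(α / 2) • n‖ = α / 2 := by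
      rw [norm_smul, hn_norm, Real.norm_eq_abs, abs_of_nonneg (by linarith), mul_one]
    rw [hnrm, smul_smul]
    rcases eq_or_ne α 0 with h | h
    · simp [h, hc, hs]
    · rw [div_mul_cancel₀ _ (by positivity : α / 2 ≠ 0)]
  -- unit axis components
  have hn1 : n.imI ^ 2 + n.imJ ^ 2 + n.imK ^ 2 = 1 := by
    have h1 : normSq n = 1 := by
      rw [normSq_eq_norm_mul_self, hn_norm, one_mul]
    have h2 := normSq_def' (a := n)
    rw [h1] at h2
    simpa [hn_re] using h2.symm
  have hq1 : ‖q‖ = 1 := by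
    rw [hq, Quaternion.norm_exp]
    simp [hn_re]
  -- integrability
  have hg : Integrable (fun x => ‖v x‖ ^ 2) := by
    by_contra h
    rw [integral_undef h] at hnorm
    norm_num at hnorm
  set f : EuclideanSpace ℝ (Fin m) → ℍ[ℝ] := fun x => star (q * v x * star q) * v x with hf
  have hfm : Measurable f := by
    have hcont : Continuous fun w : ℍ[ℝ] => star (q * w * star q) * w := by
      fun_prop
    exact hcont.measurable.comp hmeas
  have hfi : Integrable f := by
    refine (hg.mono' hfm.aestronglyMeasurable ?_)
    filter_upwards with x
    have he : ‖f x‖ = ‖v x‖ ^ 2 := by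
      show ‖star (q * v x * star q) * v x‖ = _
      rw [norm_mul, Quaternion.norm_star, norm_mul, norm_mul, Quaternion.norm_star, hq1, sq]
      ring
    rw [he]
  -- the key integral identity
  have hsin : Real.sin α = 2 * s * c := by
    have h2 : 2 * (α / 2) = α := by ring
    rw [hc, hs, ← Real.sin_two_mul, h2]
  have h1 : ∀ a : ℍ[ℝ], (inner ℝ (star n) a : ℝ) = (a * n).re := by
    intro a
    rw [real_inner_comm, inner_def, star_star]
  have hCn : (C * n).re = -(Real.sin α * ∫ x, ‖v x - (inner ℝ (v x) n : ℝ) • n‖ ^ 2) := by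
    rw [← h1, hC, ← integral_inner hfi]
    have h3 : ∀ x, (inner ℝ (star n) (f x) : ℝ)
        = -((2 * s * c) * ‖v x - (inner ℝ (v x) n : ℝ) • n‖ ^ 2) := by
      intro x
      rw [h1]
      have := key_pointwise c s n (v x) hn_re (hre x) hn1
      rw [← hq'] at this
      exact this
    simp_rw [h3]
    rw [integral_neg, integral_const_mul, hsin]
  -- assemble
  have hsum : C.imI * n.imI + C.imJ * n.imJ + C.imK * n.imK
      = Real.sin α * ∫ x, ‖v x - (inner ℝ (v x) n : ℝ) • n‖ ^ 2 := by
    have : (C * n).re = C.re * n.re - C.imI * n.imI - C.imJ * n.imJ - C.imK * n.imK := re_mul _ _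
    rw [hCn, hn_re] at this
    linarith
  rw [hp, hq']
  simp only [re_mul, re_star, imI_star, imJ_star, imK_star, re_add, imI_add, imJ_add, imK_add,
    re_coe, imI_coe, imJ_coe, imK_coe, re_smul, imI_smul, imJ_smul, imK_smul,
    re_im, imI_im, imJ_im, imK_im, smul_eq_mul, hn_re]
  linear_combination (Real.sin (φ / 2) * ‖C.im‖⁻¹ * s) * hsum
end

section
/- Let v : ℝ^m → ℍ be a measurable vector field (re (v x) = 0 for all x) with ∫ ‖v x‖² dx = 1, n a purely imaginary unit quaternion, α ∈ [0, π], q = exp((α/2) • n), and C = ∫ star (q * v x * star q) * v x dx. Set φ = Real.arccos (re C / ‖C‖) and let p = Real.cos (φ/2) + Real.sin (φ/2) • (‖im C‖⁻¹ • im C) if im C ≠ 0, and p = 1 if im C = 0. Then the composed rotor r = star p * q has nonnegative real part: re (star p * q) ≥ 0; in particular the composed rotation angle β = 2 * Real.arccos (re r) lies in [0, π]. -/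
open Quaternion MeasureTheory

local notation "⟪" x ", " y "⟫" => @inner ℝ _ _ x y

lemma key_pointwise_s7 (c s : ℝ) (hcs : 0 ≤ c * s) (n w : ℍ[ℝ]) (hn : n.re = 0) (hw : w.re = 0) :
    0 ≤ ⟪n, star (((c : ℍ[ℝ]) + s • n) * w * star ((c : ℍ[ℝ]) + s • n)) * w⟫ := by
  rw [Quaternion.inner_def]
  simp only [Quaternion.re_mul, Quaternion.imI_mul, Quaternion.imJ_mul, Quaternion.imK_mul,
    Quaternion.re_star, Quaternion.imI_star, Quaternion.imJ_star, Quaternion.imK_star,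
    Quaternion.re_add, Quaternion.imI_add, Quaternion.imJ_add, Quaternion.imK_add,
    Quaternion.re_coe, Quaternion.imI_coe, Quaternion.imJ_coe, Quaternion.imK_coe,
    Quaternion.re_smul, Quaternion.imI_smul, Quaternion.imJ_smul, Quaternion.imK_smul,
    hn, hw, smul_eq_mul, mul_zero, zero_mul, add_zero, zero_add, sub_zero, neg_neg, neg_zero]
  nlinarith [mul_nonneg hcs (sq_nonneg (w.imI * n.imJ - w.imJ * n.imI)),
    mul_nonneg hcs (sq_nonneg (w.imI * n.imK - w.imK * n.imI)),
    mul_nonneg hcs (sq_nonneg (w.imJ * n.imK - w.imK * n.imJ))]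

theorem composed_rotor_re_nonneg
    {m : ℕ} (v : EuclideanSpace ℝ (Fin m) → ℍ[ℝ])
    (hmeas : Measurable v)
    (hre : ∀ x, (v x).re = 0)
    (hnorm : ∫ x, ‖v x‖ ^ 2 = 1)
    (n : ℍ[ℝ]) (hn_re : n.re = 0) (hn_norm : ‖n‖ = 1)
    (α : ℝ) (hα0 : 0 ≤ α) (hαπ : α ≤ Real.pi)
    (q C : ℍ[ℝ])
    (hq : q = NormedSpace.exp ((α / 2) • n))
    (hC : C = ∫ x, star (q * v x * star q) * v x)
    (φ : ℝ) (hφ : φ = Real.arccos (C.re / ‖C‖))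
    (p : ℍ[ℝ])
    (hp₁ : C.im ≠ 0 → p = ((Real.cos (φ / 2) : ℝ) : ℍ[ℝ])
        + Real.sin (φ / 2) • (‖C.im‖⁻¹ • C.im))
    (hp₀ : C.im = 0 → p = 1) :
    0 ≤ (star p * q).re := by
  set c := Real.cos (α / 2) with hc_def
  set s := Real.sin (α / 2) with hs_def
  -- closed form for q
  have hq' : q = (c : ℍ[ℝ]) + s • n := by
    rw [hq, Quaternion.exp_of_re_eq_zero _ (by simp [hn_re])]
    have hnorm' : ‖(α / 2) • n‖ = α / 2 := by
      rw [norm_smul, hn_norm, Real.norm_eq_abs, abs_of_nonneg (by linarith), mul_one]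
    rw [hnorm', smul_smul]
    rcases eq_or_ne α 0 with h0 | h0
    · simp [h0, hc_def, hs_def]
    · rw [div_mul_cancel₀ _ (by positivity : α / 2 ≠ 0)]
  have hc : 0 ≤ c := Real.cos_nonneg_of_mem_Icc
    ⟨by linarith [Real.pi_pos.le], by linarith⟩
  have hs : 0 ≤ s := Real.sin_nonneg_of_nonneg_of_le_pi (by linarith) (by linarith)
  -- integrability
  have hInt2 : Integrable (fun x => ‖v x‖ ^ 2) := by
    by_contra h
    rw [integral_undef h] at hnorm
    norm_num at hnorm
  have hqnorm : ‖q‖ = 1 := by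
    rw [hq, Quaternion.norm_exp]
    simp [hn_re, NormedSpace.exp_zero]
  have hfeq : (fun x => star (q * v x * star q) * v x)
      = fun x => (q * (-(v x)) * star q) * v x := by
    funext x
    rw [star_mul, star_mul, star_star, (Quaternion.star_eq_neg).2 (hre x)]
    simp [mul_assoc]
  have hfmeas : Measurable fun x => star (q * v x * star q) * v x := by
    rw [hfeq]
    exact ((measurable_const.mul hmeas.neg).mul measurable_const).mul hmeas
  have hfint : Integrable fun x => star (q * v x * star q) * v x := by
    refine hInt2.mono' hfmeas.aestronglyMeasurable (Filter.Eventually.of_forall fun x => ?_)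
    simp [Quaternion.norm_star, norm_mul, hqnorm, sq]
  -- the key inner product inequality
  have hCn : 0 ≤ ⟪n, C⟫ := by
    rw [hC, ← integral_inner hfint n]
    refine integral_nonneg fun x => ?_
    have := key_pointwise_s7 c s (mul_nonneg hc hs) n (v x) hn_re (hre x)
    rwa [← hq'] at this
  have hsum : 0 ≤ n.imI * C.imI + n.imJ * C.imJ + n.imK * C.imK := by
    rw [Quaternion.inner_def, Quaternion.re_mul, Quaternion.re_star, Quaternion.imI_star,
      Quaternion.imJ_star, Quaternion.imK_star, hn_re] at hCn
    linarith
  rcases eq_or_ne C.im 0 with him | him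
  · rw [hp₀ him, star_one, one_mul, hq']
    simpa [hn_re] using hc
  · have hcφ : 0 ≤ Real.cos (φ / 2) := by
      refine Real.cos_nonneg_of_mem_Icc ⟨?_, ?_⟩
      · have := Real.arccos_nonneg (C.re / ‖C‖); rw [← hφ] at this
        linarith [Real.pi_pos.le]
      · have := Real.arccos_le_pi (C.re / ‖C‖); rw [← hφ] at this
        linarith
    have hsφ : 0 ≤ Real.sin (φ / 2) := by
      refine Real.sin_nonneg_of_nonneg_of_le_pi ?_ ?_
      · have := Real.arccos_nonneg (C.re / ‖C‖); rw [← hφ] at this; linarith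
      · have := Real.arccos_le_pi (C.re / ‖C‖); rw [← hφ] at this
        linarith [Real.pi_pos.le]
    rw [hp₁ him, hq']
    simp only [Quaternion.re_mul, Quaternion.re_star, Quaternion.imI_star, Quaternion.imJ_star,
      Quaternion.imK_star, Quaternion.re_add, Quaternion.imI_add, Quaternion.imJ_add,
      Quaternion.imK_add, Quaternion.re_coe, Quaternion.imI_coe, Quaternion.imJ_coe,
      Quaternion.imK_coe, Quaternion.re_smul, Quaternion.imI_smul, Quaternion.imJ_smul,
      Quaternion.imK_smul, Quaternion.re_im, Quaternion.imI_im, Quaternion.imJ_im,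
      Quaternion.imK_im, hn_re, smul_eq_mul, mul_zero, zero_mul, add_zero, zero_add,
      sub_zero, neg_neg, neg_zero]
    have hinv : (0 : ℝ) ≤ ‖C.im‖⁻¹ := inv_nonneg.2 (norm_nonneg _)
    nlinarith [mul_nonneg (mul_nonneg (mul_nonneg hsφ hinv) hs) hsum, mul_nonneg hcφ hc]
end

section
/- Let v : ℝ^m → ℍ be a measurable vector field (re (v x) = 0 for all x) with ∫ ‖v x‖² dx = 1, n a purely imaginary unit quaternion, α ∈ [0, π], q = exp((α/2) • n), C = ∫ star (q * v x * star q) * v x dx, and assume im C ≠ 0. Set φ = Real.arccos (re C / ‖C‖), m = ‖im C‖⁻¹ • im C, p = Real.cos (φ/2) + Real.sin (φ/2) • m, a = ∫ ‖v∥ x‖² dx and c = ‖∫ (v∥ x) * (v⊥ x) dx‖², where v⊥ x = ⟪v x, n⟫ • n and v∥ x = v x − v⊥ x. Then the squared norm of the bivector part of the composed rotor r = star p * q is ‖im r‖² = Real.sin (α/2)² * Real.cos (φ/2)² − Real.cos (φ/2) * Real.sin (φ/2) * Real.sin α ² * a / ‖im C‖ + Real.cos (α/2)² * Real.sin (φ/2)²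 * Real.sin α ² * a² / ‖im C‖² + 4 * Real.sin (α/2)² * Real.sin (φ/2)² * c / ‖im C‖². -/
open Quaternion MeasureTheory
set_option maxHeartbeats 1000000

lemma norm_sq_decomp (x : ℍ[ℝ]) : ‖x‖^2 = x.re^2 + ‖x.im‖^2 := by
  have h1 : ‖x‖^2 = Quaternion.normSq x := by
    rw [sq, Quaternion.normSq_eq_norm_mul_self]
  have h2 : ‖x.im‖^2 = Quaternion.normSq x.im := by
    rw [sq, Quaternion.normSq_eq_norm_mul_self]
  rw [h1, h2]
  simp only [Quaternion.normSq_def', Quaternion.re_im, Quaternion.imI_im,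
    Quaternion.imJ_im, Quaternion.imK_im]
  ring

lemma im_of_re_eq_zero {x : ℍ[ℝ]} (h : x.re = 0) : x.im = x := by
  ext <;> simp [h]

lemma pure_anticomm (a b : ℍ[ℝ]) (ha : a.re = 0) (hb : b.re = 0) :
    a * b + b * a = -((2 * (inner ℝ a b : ℝ) : ℝ) : ℍ[ℝ]) := by
  have hsa : star a = -a := Quaternion.star_eq_neg.2 ha
  have hsb : star b = -b := Quaternion.star_eq_neg.2 hb
  have h1 : b * a = star (a * b) := by rw [star_mul, hsa, hsb, neg_mul_neg]
  rw [h1, Quaternion.self_add_star']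
  have h2 : (a * b).re = -(inner ℝ a b : ℝ) := by
    rw [Quaternion.inner_def, hsb, mul_neg, Quaternion.re_neg, neg_neg]
  rw [h2]; norm_num

lemma pure_mul_self {w : ℍ[ℝ]} (h : w.re = 0) : w * w = -((‖w‖^2 : ℝ) : ℍ[ℝ]) := by
  have hsw : star w = -w := Quaternion.star_eq_neg.2 h
  have h1 : w * star w = ((Quaternion.normSq w : ℝ) : ℍ[ℝ]) := Quaternion.self_mul_star w
  rw [hsw, mul_neg] at h1
  have h2 : (Quaternion.normSq w : ℝ) = ‖w‖^2 := by
    rw [Quaternion.normSq_eq_norm_mul_self, sq]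
  rw [h2] at h1
  rw [← h1, neg_neg]

lemma rotor_key (s t lam r : ℝ) (n u : ℍ[ℝ]) (hsn : star n = -n) (hsu : star u = -u)
    (hst : s^2 + t^2 = 1) (hn2 : n * n = -1) (hun : u * n = -(n * u))
    (huu : u * u = -((r : ℝ) : ℍ[ℝ])) :
    star ((↑s + t • n) * (u + lam • n) * star (↑s + t • n)) * (u + lam • n)
      = (((s^2 - t^2) * r + lam^2 : ℝ) : ℍ[ℝ]) + (2*s*t*r) • n
        + (-(2*s*t)*lam) • u + ((s^2 - t^2 - 1)*lam) • (n * u) := by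
  have hc : ∀ x : ℝ, (x : ℍ[ℝ]) = x • (1 : ℍ[ℝ]) := by
    intro x; rw [← Quaternion.coe_one, Quaternion.smul_coe, mul_one]
  have h_nun : n * u * n = u := by
    rw [mul_assoc, hun, mul_neg, ← mul_assoc, hn2, neg_one_mul, neg_neg]
  have h_nuu : n * u * u = -(r • n) := by
    rw [mul_assoc, huu, mul_neg, Quaternion.mul_coe_eq_smul]
  have hmain : star ((↑s + t • n) * (u + lam • n) * star (↑s + t • n))
      = (↑s + t • n) * star (u + lam • n) * star (↑s + t • n) := by
    rw [star_mul, star_mul, star_star, mul_assoc]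
  have hsw : star (u + lam • n) = -u + (-lam) • n := by
    rw [star_add, Quaternion.star_smul, hsn, hsu, smul_neg, neg_smul]
  have hsq : star ((↑s : ℍ[ℝ]) + t • n) = ↑s + (-t) • n := by
    rw [star_add, Quaternion.star_smul, hsn, Quaternion.star_coe, smul_neg, neg_smul]
  rw [hmain, hsw, hsq]
  simp only [hc, add_mul, mul_add, smul_mul_assoc, mul_smul_comm, smul_smul, one_mul,
    mul_one, hn2, hun, h_nun, h_nuu, huu, smul_neg, neg_smul, neg_mul, mul_neg, neg_neg]
  match_scalars <;> (first | (linear_combination lam^2 * hst) | (linear_combination (-lam) * hst) | ring)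

theorem composed_rotor_bivector_norm_sq
    {m : ℕ} (v : EuclideanSpace ℝ (Fin m) → ℍ[ℝ])
    (hmeas : Measurable v)
    (hre : ∀ x, (v x).re = 0)
    (hnorm : ∫ x, ‖v x‖ ^ 2 = 1)
    (n : ℍ[ℝ]) (hn_re : n.re = 0) (hn_norm : ‖n‖ = 1)
    (α : ℝ) (hα0 : 0 ≤ α) (hαπ : α ≤ Real.pi)
    (q C : ℍ[ℝ])
    (hq : q = NormedSpace.exp ((α / 2) • n))
    (hC : C = ∫ x, star (q * v x * star q) * v x)
    (him : C.im ≠ 0)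
    (φ : ℝ) (hφ : φ = Real.arccos (C.re / ‖C‖))
    (p : ℍ[ℝ])
    (hp : p = ((Real.cos (φ / 2) : ℝ) : ℍ[ℝ])
        + Real.sin (φ / 2) • (‖C.im‖⁻¹ • C.im))
    (a c : ℝ)
    (ha : a = ∫ x, ‖v x - (inner ℝ (v x) n : ℝ) • n‖ ^ 2)
    (hc : c = ‖∫ x, (v x - (inner ℝ (v x) n : ℝ) • n) * ((inner ℝ (v x) n : ℝ) • n)‖ ^ 2) :
    ‖(star p * q).im‖ ^ 2 =
      Real.sin (α / 2) ^ 2 * Real.cos (φ / 2) ^ 2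
        - Real.cos (φ / 2) * Real.sin (φ / 2) * Real.sin α ^ 2 * a / ‖C.im‖
        + Real.cos (α / 2) ^ 2 * Real.sin (φ / 2) ^ 2 * Real.sin α ^ 2 * a ^ 2 / ‖C.im‖ ^ 2
        + 4 * Real.sin (α / 2) ^ 2 * Real.sin (φ / 2) ^ 2 * c / ‖C.im‖ ^ 2 := by
  -- abbreviations
  set s : ℝ := Real.cos (α / 2) with hs_def
  set t : ℝ := Real.sin (α / 2) with ht_def
  set lam : EuclideanSpace ℝ (Fin m) → ℝ := fun x => (inner ℝ (v x) n : ℝ) with hlam_def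
  set u : EuclideanSpace ℝ (Fin m) → ℍ[ℝ] := fun x => v x - lam x • n with hu_def
  -- basic facts about n
  have hsn : star n = -n := Quaternion.star_eq_neg.2 hn_re
  have hn2 : n * n = -1 := by
    rw [pure_mul_self hn_re, hn_norm]; norm_num
  have hst : s ^ 2 + t ^ 2 = 1 := by
    rw [hs_def, ht_def]; exact Real.cos_sq_add_sin_sq _
  -- integrability of ‖v‖²
  have h2 : Integrable (fun x => ‖v x‖ ^ 2) := by
    by_contra h
    rw [integral_undef h] at hnorm
    exact one_ne_zero hnorm.symm
  -- pointwise facts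
  have hu_re : ∀ x, (u x).re = 0 := by
    intro x
    simp [hu_def, hre x, hn_re]
  have hsu : ∀ x, star (u x) = -(u x) := fun x => Quaternion.star_eq_neg.2 (hu_re x)
  have hun_inner : ∀ x, (inner ℝ (u x) n : ℝ) = 0 := by
    intro x
    simp only [hu_def]
    rw [inner_sub_left, real_inner_smul_left, real_inner_self_eq_norm_sq, hn_norm]
    simp [hlam_def]
  have hun : ∀ x, u x * n = -(n * u x) := by
    intro x
    have h := pure_anticomm (u x) n (hu_re x) hn_re
    rw [hun_inner x] at h
    simp only [mul_zero, Quaternion.coe_zero, neg_zero] at h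
    exact eq_neg_of_add_eq_zero_left h
  have hvx : ∀ x, v x = u x + lam x • n := by
    intro x; simp [hu_def]
  -- measurability
  have hcont_inner : Continuous fun w : ℍ[ℝ] => (inner ℝ w n : ℝ) :=
    continuous_id.inner continuous_const
  have hmeas_lam : Measurable lam := hcont_inner.measurable.comp hmeas
  have hmeas_u : Measurable u := hmeas.sub (hmeas_lam.smul measurable_const)
  have hmeas_lu : Measurable (fun x => lam x • u x) := hmeas_lam.smul hmeas_u
  -- bounds
  have hlam_bound : ∀ x, |lam x| ≤ ‖v x‖ := by
    intro x
    calc |lam x| ≤ ‖v x‖ * ‖n‖ := abs_real_inner_le_norm _ _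
    _ = ‖v x‖ := by rw [hn_norm, mul_one]
  have hu_bound : ∀ x, ‖u x‖ ≤ 2 * ‖v x‖ := by
    intro x
    calc ‖u x‖ ≤ ‖v x‖ + ‖lam x • n‖ := norm_sub_le _ _
    _ = ‖v x‖ + |lam x| := by rw [norm_smul, hn_norm, mul_one, Real.norm_eq_abs]
    _ ≤ ‖v x‖ + ‖v x‖ := by linarith [hlam_bound x]
    _ = 2 * ‖v x‖ := by ring
  -- integrability
  have I1 : Integrable (fun x => lam x • u x) := by
    refine (h2.const_mul 2).mono' hmeas_lu.aestronglyMeasurable ?_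
    filter_upwards with x
    rw [norm_smul, Real.norm_eq_abs]
    calc |lam x| * ‖u x‖ ≤ ‖v x‖ * (2 * ‖v x‖) := by
          exact mul_le_mul (hlam_bound x) (hu_bound x) (norm_nonneg _) (norm_nonneg _)
    _ = 2 * ‖v x‖ ^ 2 := by ring
  have Iu2 : Integrable (fun x => ‖u x‖ ^ 2) := by
    refine (h2.const_mul 4).mono' (hmeas_u.norm.pow_const 2).aestronglyMeasurable ?_
    filter_upwards with x
    rw [Real.norm_eq_abs, abs_of_nonneg (by positivity)]
    calc ‖u x‖ ^ 2 ≤ (2 * ‖v x‖) ^ 2 := by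
          exact pow_le_pow_left₀ (norm_nonneg _) (hu_bound x) 2
    _ = 4 * ‖v x‖ ^ 2 := by ring
  have Ilam2 : Integrable (fun x => lam x ^ 2) := by
    refine h2.mono' (hmeas_lam.pow_const 2).aestronglyMeasurable ?_
    filter_upwards with x
    rw [Real.norm_eq_abs, abs_of_nonneg (by positivity)]
    calc lam x ^ 2 = |lam x| ^ 2 := (sq_abs _).symm
    _ ≤ ‖v x‖ ^ 2 := pow_le_pow_left₀ (abs_nonneg _) (hlam_bound x) 2
  -- α ≠ 0
  have hα_pos : 0 < α := by
    rcases lt_or_eq_of_le hα0 with h | h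
    · exact h
    · exfalso
      apply him
      have hq1 : q = 1 := by
        rw [hq, ← h, zero_div, zero_smul, NormedSpace.exp_zero]
      have hpt : ∀ x, star (q * v x * star q) * v x = (‖v x‖ ^ 2) • (1 : ℍ[ℝ]) := by
        intro x
        rw [hq1]
        simp only [one_mul, star_one, mul_one]
        rw [Quaternion.star_eq_neg.2 (hre x), neg_mul, pure_mul_self (hre x)]
        rw [neg_neg, ← Quaternion.coe_one, Quaternion.smul_coe, mul_one]
      rw [hC]
      simp_rw [hpt]
      rw [integral_smul_const, hnorm, one_smul]
      simp
  have ht_pos : 0 < t := by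
    rw [ht_def]
    apply Real.sin_pos_of_pos_of_lt_pi (by linarith)
    linarith [Real.pi_pos]
  -- formula for q
  have hq' : q = ↑s + t • n := by
    rw [hq, Quaternion.exp_of_re_eq_zero _ (by simp [hn_re])]
    have hnm : ‖(α / 2) • n‖ = α / 2 := by
      rw [norm_smul, hn_norm, mul_one, Real.norm_eq_abs, abs_of_pos (by linarith)]
    rw [hnm, smul_smul, div_mul_cancel₀ _ (by linarith : α / 2 ≠ 0)]
  -- the integral decomposition
  set D : ℍ[ℝ] := ∫ x, lam x • u x with hD_def
  set r0 : ℝ := ∫ x, ((s^2 - t^2) * ‖u x‖^2 + lam x ^ 2) with hr0_def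
  have ha' : a = ∫ x, ‖u x‖ ^ 2 := ha
  have hpt : ∀ x, star (q * v x * star q) * v x
      = ((s^2 - t^2) * ‖u x‖^2 + lam x ^ 2) • (1 : ℍ[ℝ])
        + (2*s*t*‖u x‖^2) • n
        + (-(2*s*t)) • (lam x • u x)
        + (s^2 - t^2 - 1) • (n * (lam x • u x)) := by
    intro x
    conv_lhs => rw [hq', hvx x]
    rw [rotor_key s t (lam x) (‖u x‖^2) n (u x) hsn (hsu x) hst hn2 (hun x)
      (pure_mul_self (hu_re x))]
    rw [smul_smul, mul_smul_comm, smul_smul]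
    rw [← Quaternion.coe_one, Quaternion.smul_coe, mul_one]
  have If1 : Integrable (fun x => ((s^2 - t^2) * ‖u x‖^2 + lam x ^ 2) • (1 : ℍ[ℝ])) :=
    ((Iu2.const_mul (s^2 - t^2)).add Ilam2).smul_const _
  have If2 : Integrable (fun x => (2*s*t*‖u x‖^2) • n) :=
    (Iu2.const_mul (2*s*t)).smul_const n
  have If3 : Integrable (fun x => (-(2*s*t)) • (lam x • u x)) := by
    have h := (I1.smul (2*s*t)).neg
    have heq : (fun x => (-(2*s*t)) • (lam x • u x))
        = fun x => -((2*s*t) • (lam x • u x)) := by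
      funext x; rw [neg_smul]
    rw [heq]; exact h
  have Inlu : Integrable (fun x => n * (lam x • u x)) := by
    have := (ContinuousLinearMap.mul ℝ ℍ[ℝ] n).integrable_comp I1
    simpa using this
  have If4 : Integrable (fun x => (s^2 - t^2 - 1) • (n * (lam x • u x))) := by
    have h := Inlu.smul (s^2 - t^2 - 1)
    exact h
  have hCdec : C = r0 • (1 : ℍ[ℝ]) + (2*s*t*a) • n + (-(2*s*t)) • D
      + (s^2 - t^2 - 1) • (n * D) := by
    rw [hC]
    calc (∫ x, star (q * v x * star q) * v x)
        = ∫ x, (((s^2 - t^2) * ‖u x‖^2 + lam x ^ 2) • (1 : ℍ[ℝ])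
            + (2*s*t*‖u x‖^2) • n
            + (-(2*s*t)) • (lam x • u x)
            + (s^2 - t^2 - 1) • (n * (lam x • u x))) := by
          exact integral_congr_ae (Filter.Eventually.of_forall hpt)
      _ = r0 • (1 : ℍ[ℝ]) + (2*s*t*a) • n + (-(2*s*t)) • D
            + (s^2 - t^2 - 1) • (n * D) := by
          have If12 : Integrable (fun x => ((s^2 - t^2) * ‖u x‖^2 + lam x ^ 2) • (1 : ℍ[ℝ])
              + (2*s*t*‖u x‖^2) • n) := If1.add If2
          have If123 : Integrable (fun x => ((s^2 - t^2) * ‖u x‖^2 + lam x ^ 2) • (1 : ℍ[ℝ])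
              + (2*s*t*‖u x‖^2) • n + (-(2*s*t)) • (lam x • u x)) := If12.add If3
          rw [integral_add If123 If4, integral_add If12 If3, integral_add If1 If2]
          congr 1
          · congr 1
            · congr 1
              · rw [integral_smul_const]
              · rw [integral_smul_const]
                congr 1
                rw [ha', ← integral_const_mul]
            · rw [integral_smul]
          · rw [integral_smul]
            congr 1
            have := (ContinuousLinearMap.mul ℝ ℍ[ℝ] n).integral_comp_comm I1
            simpa using this
  -- properties of D
  have hinner1 : ∀ w : ℍ[ℝ], (inner ℝ (1 : ℍ[ℝ]) w : ℝ) = w.re := by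
    intro w; rw [Quaternion.inner_def, one_mul, Quaternion.re_star]
  have hD_re : D.re = 0 := by
    have hL := (innerSL ℝ (1 : ℍ[ℝ])).integral_comp_comm I1
    simp only [innerSL_apply_apply] at hL
    rw [← hinner1 D, ← hL]
    have : ∀ x, (inner ℝ (1 : ℍ[ℝ]) (lam x • u x) : ℝ) = 0 := by
      intro x
      rw [real_inner_smul_right, hinner1, hu_re x, mul_zero]
    simp_rw [this, integral_zero]
  have hDn : (inner ℝ n D : ℝ) = 0 := by
    have hL := (innerSL ℝ n).integral_comp_comm I1
    simp only [innerSL_apply_apply] at hL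
    rw [← hL]
    have : ∀ x, (inner ℝ n (lam x • u x) : ℝ) = 0 := by
      intro x
      rw [real_inner_smul_right, real_inner_comm, hun_inner x, mul_zero]
    simp_rw [this, integral_zero]
  have hDn' : (inner ℝ D n : ℝ) = 0 := by rw [real_inner_comm]; exact hDn
  have hsD : star D = -D := Quaternion.star_eq_neg.2 hD_re
  have hDanti : D * n = -(n * D) := by
    have h := pure_anticomm D n hD_re hn_re
    rw [hDn'] at h
    simp only [mul_zero, Quaternion.coe_zero, neg_zero] at h
    exact eq_neg_of_add_eq_zero_left h
  have hnD_re : (n * D).re = 0 := by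
    have h := Quaternion.inner_def n D
    rw [hsD, mul_neg, Quaternion.re_neg] at h
    rw [hDn] at h
    linarith
  have h_nDn : (inner ℝ (n * D) n : ℝ) = 0 := by
    rw [Quaternion.inner_def, hsn, mul_neg, Quaternion.re_neg]
    have h : n * D * n = D := by
      rw [mul_assoc, hDanti, mul_neg, ← mul_assoc, hn2, neg_one_mul, neg_neg]
    rw [h, hD_re, neg_zero]
  have h_nDD : (inner ℝ (n * D) D : ℝ) = 0 := by
    rw [Quaternion.inner_def, hsD, mul_neg, Quaternion.re_neg]
    have h : n * D * D = -(‖D‖^2 • n) := by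
      rw [mul_assoc, pure_mul_self hD_re, mul_neg, Quaternion.mul_coe_eq_smul]
    rw [h, Quaternion.re_neg, Quaternion.re_smul, hn_re, smul_zero, neg_zero, neg_zero]
  have h_n_nD : (inner ℝ n (n * D) : ℝ) = 0 := by rw [real_inner_comm]; exact h_nDn
  have h_D_nD : (inner ℝ D (n * D) : ℝ) = 0 := by rw [real_inner_comm]; exact h_nDD
  have hnD_norm : ‖n * D‖ = ‖D‖ := by rw [norm_mul, hn_norm, one_mul]
  -- image part of C
  have hCim : C.im = (2*s*t*a) • n + (-(2*s*t)) • D + (s^2 - t^2 - 1) • (n * D) := by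
    rw [hCdec]
    simp only [Quaternion.im_add, Quaternion.im_smul, Quaternion.im_one, smul_zero, zero_add,
      im_of_re_eq_zero hn_re, im_of_re_eq_zero hD_re, im_of_re_eq_zero hnD_re]
  have hCim_n : (inner ℝ C.im n : ℝ) = 2*s*t*a := by
    rw [hCim, inner_add_left, inner_add_left]
    rw [real_inner_smul_left, real_inner_smul_left, real_inner_smul_left]
    rw [hDn', h_nDn, real_inner_self_eq_norm_sq, hn_norm]
    ring
  have hCim_normsq : ‖C.im‖^2 = 4*s^2*t^2*a^2 + 4*t^2*‖D‖^2 := by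
    rw [hCim]
    rw [norm_add_sq_real, norm_add_sq_real]
    simp only [inner_add_left, real_inner_smul_left, real_inner_smul_right,
      hDn, hDn', h_n_nD, h_D_nD, mul_zero, zero_add, add_zero,
      norm_smul, Real.norm_eq_abs, hn_norm, hnD_norm, mul_pow, sq_abs, mul_one]
    linear_combination (‖D‖^2 * (s^2 + t^2 - 1)) * hst
  -- c = ‖D‖²
  have hc' : c = ‖∫ x, (u x) * (lam x • n)‖ ^ 2 := hc
  have hcD : c = ‖D‖^2 := by
    rw [hc']
    have hptc : ∀ x, (u x) * (lam x • n) = ((ContinuousLinearMap.mul ℝ ℍ[ℝ]).flip n) (lam x • u x) := by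
      intro x
      simp only [ContinuousLinearMap.flip_apply, ContinuousLinearMap.mul_apply']
      rw [mul_smul_comm, smul_mul_assoc]
    simp_rw [hptc]
    rw [((ContinuousLinearMap.mul ℝ ℍ[ℝ]).flip n).integral_comp_comm I1]
    simp only [ContinuousLinearMap.flip_apply, ContinuousLinearMap.mul_apply']
    rw [norm_mul, hn_norm, mul_one]
  -- facts about p and r = star p * q
  set c1 : ℝ := Real.cos (φ / 2) with hc1_def
  set s1 : ℝ := Real.sin (φ / 2) with hs1_def
  have hc1s1 : c1^2 + s1^2 = 1 := Real.cos_sq_add_sin_sq _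
  set N : ℝ := ‖C.im‖ with hN_def
  have hN_pos : 0 < N := norm_pos_iff.mpr him
  set mdir : ℍ[ℝ] := N⁻¹ • C.im with hmdir_def
  have hmdir_norm : ‖mdir‖ = 1 := by
    rw [hmdir_def, norm_smul, Real.norm_eq_abs, abs_of_pos (inv_pos.mpr hN_pos)]
    rw [← hN_def, inv_mul_cancel₀ hN_pos.ne']
  have hmdir_re : mdir.re = 0 := by
    rw [hmdir_def, Quaternion.re_smul, Quaternion.re_im, smul_zero]
  have hp' : p = ↑c1 + s1 • mdir := hp
  clear_value N mdir
  -- norms of p and q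
  have hnorm_sq_smul : ∀ (x : ℝ) (w : ℍ[ℝ]), w.re = 0 → ‖(↑x + w : ℍ[ℝ])‖^2 = x^2 + ‖w‖^2 := by
    intro x w hw
    rw [norm_sq_decomp]
    congr 1
    · rw [Quaternion.re_add, Quaternion.re_coe, hw, add_zero]
    · rw [Quaternion.im_add, Quaternion.im_coe, zero_add, im_of_re_eq_zero hw]
  have hp_norm : ‖p‖^2 = 1 := by
    rw [hp', hnorm_sq_smul c1 (s1 • mdir) (by rw [Quaternion.re_smul, hmdir_re, smul_zero])]
    rw [norm_smul, Real.norm_eq_abs, hmdir_norm, mul_one, sq_abs]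
    exact hc1s1
  have hq_norm : ‖q‖^2 = 1 := by
    rw [hq', hnorm_sq_smul s (t • n) (by rw [Quaternion.re_smul, hn_re, smul_zero])]
    rw [norm_smul, Real.norm_eq_abs, hn_norm, mul_one, sq_abs]
    exact hst
  have hr_norm : ‖star p * q‖^2 = 1 := by
    rw [norm_mul, Quaternion.norm_star, mul_pow, hp_norm, hq_norm, mul_one]
  -- real part of star p * q
  have hmul_re_comm : ∀ x y : ℍ[ℝ], (x * y).re = (y * x).re := by
    intro x y
    simp only [Quaternion.re_mul]
    ring
  have hr_re : (star p * q).re = (inner ℝ p q : ℝ) := by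
    rw [hmul_re_comm, ← Quaternion.inner_def, real_inner_comm]
  have hmn : (inner ℝ mdir n : ℝ) = N⁻¹ * (2*s*t*a) := by
    rw [hmdir_def, real_inner_smul_left, hCim_n]
  have hpq_inner : (inner ℝ p q : ℝ) = c1 * s + s1 * t * (N⁻¹ * (2*s*t*a)) := by
    rw [hp', hq']
    simp only [inner_add_left, inner_add_right, real_inner_smul_left, real_inner_smul_right]
    have h11 : (inner ℝ (↑c1 : ℍ[ℝ]) (↑s : ℍ[ℝ]) : ℝ) = c1 * s := by
      rw [Quaternion.inner_def, Quaternion.star_coe, ← Quaternion.coe_mul, Quaternion.re_coe]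
    have h1n : (inner ℝ (↑c1 : ℍ[ℝ]) n : ℝ) = 0 := by
      rw [Quaternion.inner_def, hsn, mul_neg, Quaternion.re_neg, Quaternion.coe_mul_eq_smul,
        Quaternion.re_smul, hn_re, smul_zero, neg_zero]
    have hm1 : (inner ℝ mdir (↑s : ℍ[ℝ]) : ℝ) = 0 := by
      rw [Quaternion.inner_def, Quaternion.star_coe, Quaternion.mul_coe_eq_smul,
        Quaternion.re_smul, hmdir_re, smul_zero]
    rw [h11, h1n, hm1, hmn]
    ring
  -- squared norm of the imaginary part of r
  have hr_im : ‖(star p * q).im‖^2 = 1 - (c1 * s + s1 * t * (N⁻¹ * (2*s*t*a)))^2 := by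
    have h := norm_sq_decomp (star p * q)
    rw [hr_norm, hr_re, hpq_inner] at h
    linarith
  -- final algebra
  rw [hr_im]
  have hsinα : Real.sin α = 2 * t * s := by
    have h : α = 2 * (α / 2) := by ring
    rw [h, Real.sin_two_mul, ← ht_def, ← hs_def]
  rw [hsinα]
  have hN2 : N^2 = 4*s^2*t^2*a^2 + 4*t^2*c := by
    rw [hCim_normsq, hcD]
  have ht_ne : t ≠ 0 := ht_pos.ne'
  have hc_val : c = (N^2 - 4*s^2*t^2*a^2)/(4*t^2) := by
    field_simp
    linarith [hN2]
  rw [hc_val]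
  have hN_ne : N ≠ 0 := hN_pos.ne'
  field_simp
  linear_combination (-(4*s^2*s1^2*t^2*a^2 + N^2*c1^2)) * hst
    + (-(N^2)) * hc1s1
end

section
/- (Lemma 1 of the paper.) Let v : ℝ^m → ℍ be a measurable vector field (re (v x) = 0 for all x) with ∫ ‖v x‖² dx = 1, n a purely imaginary unit quaternion, α ∈ [0, π), q = exp((α/2) • n), and C = ∫ star (q * v x * star q) * v x dx. Set φ = Real.arccos (re C / ‖C‖) and let p = Real.cos (φ/2) + Real.sin (φ/2) • (‖im C‖⁻¹ • im C) if im C ≠ 0, and p = 1 if im C = 0. Then re (star p * q) ≥ Real.cos (α/2); equivalently the composed rotation angle β = 2 * Real.arccos (re (star p * q)) satisfies β ≤ α. That is, applying the outer rotation encoded in the normalized geometric cross correlation to the rotated copy of v never increases the rotational misalignment. -/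
open Quaternion MeasureTheory

set_option maxHeartbeats 800000 in
private lemma aux_inner_fq (n w : ℍ[ℝ]) (hn_re : n.re = 0)
    (hn2 : n.imI ^ 2 + n.imJ ^ 2 + n.imK ^ 2 = 1)
    (hw : w.re = 0) (c s : ℝ) (hcs : c ^ 2 + s ^ 2 = 1) :
    (inner ℝ (star (((c:ℍ[ℝ]) + s • n) * w * star ((c:ℍ[ℝ]) + s • n)) * w)
      ((c:ℍ[ℝ]) + s • n) : ℝ) = c * ‖w‖ ^ 2 := by
  have hns : ‖w‖ ^ 2 = w.imI ^ 2 + w.imJ ^ 2 + w.imK ^ 2 := by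
    have h1 := Quaternion.normSq_eq_norm_mul_self w
    rw [Quaternion.normSq_def', hw] at h1
    nlinarith [h1]
  rw [Quaternion.inner_def, hns]
  simp [Quaternion.re_mul, Quaternion.imI_mul, Quaternion.imJ_mul, Quaternion.imK_mul,
    Quaternion.re_star, Quaternion.imI_star, Quaternion.imJ_star, Quaternion.imK_star,
    Quaternion.re_add, Quaternion.imI_add, Quaternion.imJ_add, Quaternion.imK_add,
    Quaternion.re_smul, Quaternion.imI_smul, Quaternion.imJ_smul, Quaternion.imK_smul,
    Quaternion.re_coe, Quaternion.imI_coe, Quaternion.imJ_coe, Quaternion.imK_coe,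
    hn_re, hw]
  have hrel : c ^ 2 + s ^ 2 * (n.imI ^ 2 + n.imJ ^ 2 + n.imK ^ 2) = 1 := by
    rw [hn2]; linarith
  linear_combination (c * (w.imI ^ 2 + w.imJ ^ 2 + w.imK ^ 2)) * hrel

private lemma aux_inner_Cq (C n : ℍ[ℝ]) (hn_re : n.re = 0) (c s : ℝ) :
    (inner ℝ C ((c:ℍ[ℝ]) + s • n) : ℝ)
      = c * C.re + s * (C.imI * n.imI + C.imJ * n.imJ + C.imK * n.imK) := by
  rw [Quaternion.inner_def]
  simp [Quaternion.re_mul, Quaternion.re_star, Quaternion.imI_star, Quaternion.imJ_star,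
    Quaternion.imK_star, Quaternion.re_add, Quaternion.imI_add, Quaternion.imJ_add,
    Quaternion.imK_add, Quaternion.re_smul, Quaternion.imI_smul, Quaternion.imJ_smul,
    Quaternion.imK_smul, Quaternion.re_coe, Quaternion.imI_coe, Quaternion.imJ_coe,
    Quaternion.imK_coe, hn_re]
  ring

private lemma aux_re_spq (C n : ℍ[ℝ]) (hn_re : n.re = 0) (c s cφ sφ : ℝ) :
    (star (((cφ : ℝ) : ℍ[ℝ]) + sφ • (‖C.im‖⁻¹ • C.im)) * ((c:ℍ[ℝ]) + s • n)).re
      = cφ * c + sφ * s * (‖C.im‖⁻¹ * (C.imI * n.imI + C.imJ * n.imJ + C.imK * n.imK)) := by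
  simp [Quaternion.re_mul, Quaternion.re_star, Quaternion.imI_star, Quaternion.imJ_star,
    Quaternion.imK_star, Quaternion.re_add, Quaternion.imI_add, Quaternion.imJ_add,
    Quaternion.imK_add, Quaternion.re_smul, Quaternion.imI_smul, Quaternion.imJ_smul,
    Quaternion.imK_smul, Quaternion.re_coe, Quaternion.imI_coe, Quaternion.imJ_coe,
    Quaternion.imK_coe, hn_re, Quaternion.re_im, Quaternion.imI_im, Quaternion.imJ_im,
    Quaternion.imK_im]
  ring

private lemma aux_final (c s R N K E cφ sφ : ℝ)
    (hc : 0 < c) (hs0 : 0 ≤ s) (hN1 : N ≤ 1) (hN : 0 < N) (hK : 0 < K)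
    (hNsq : N ^ 2 = R ^ 2 + K ^ 2) (hEs : c * R + s * E = c)
    (hcφ0 : 0 ≤ cφ) (hsφ0 : 0 ≤ sφ) (hcφ1 : cφ ≤ 1)
    (hsin2 : 2 * sφ * cφ = K / N) (hcsq : 2 * cφ ^ 2 * N = N + R) :
    c ≤ cφ * c + sφ * s * (K⁻¹ * E) := by
  have hcφ_pos : 0 < cφ := by
    rcases hcφ0.lt_or_eq with h | h
    · exact h
    · exfalso
      rw [← h, mul_zero] at hsin2
      have : K = 0 := by field_simp at hsin2; linarith
      linarith
  have hsφ_pos : 0 < sφ := by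
    rcases hsφ0.lt_or_eq with h | h
    · exact h
    · exfalso
      rw [← h] at hsin2
      have : K = 0 := by field_simp at hsin2; linarith
      linarith
  have hs_pos : 0 < s := by
    rcases hs0.lt_or_eq with h | h
    · exact h
    · exfalso
      rw [← h, zero_mul, add_zero] at hEs
      have hR1 : R = 1 := by
        have h3 : c * (R - 1) = 0 := by linarith
        rcases mul_eq_zero.mp h3 with h' | h'
        · exact absurd h' (ne_of_gt hc)
        · linarith
      nlinarith [hNsq, hK, hN1, hN]
  have hE_val : s * E = c * (1 - R) := by linarith
  have hK2 : K = 2 * sφ * cφ * N := by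
    field_simp at hsin2; linarith
  have hterm : sφ * s * (K⁻¹ * E) = c * (1 - R) / (2 * cφ * N) := by
    rw [hK2, eq_div_iff (by positivity)]
    have hne : (2 * sφ * cφ * N) ≠ 0 := by positivity
    field_simp
    nlinarith [hE_val, hsφ_pos]
  rw [hterm]
  have key : 2 * cφ * N ≤ N + 1 := by nlinarith
  rw [← sub_nonneg]
  have hsplit : cφ * c + c * (1 - R) / (2 * cφ * N) - c
      = (cφ * c * (2 * cφ * N) + c * (1 - R) - c * (2 * cφ * N)) / (2 * cφ * N) := by
    field_simp
  rw [hsplit]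
  apply div_nonneg _ (by positivity)
  nlinarith [mul_nonneg hc.le (sub_nonneg.2 key), hcsq, hc]

set_option maxHeartbeats 1600000 in
/-- Lemma 1 of the paper: applying the rotor encoded in the normalized geometric
cross correlation never increases the rotational misalignment. -/
theorem correlation_rotor_does_not_increase_misalignment
    {m : ℕ} (v : EuclideanSpace ℝ (Fin m) → ℍ[ℝ])
    (hmeas : Measurable v)
    (hre : ∀ x, (v x).re = 0)
    (hnorm : ∫ x, ‖v x‖ ^ 2 = 1)
    (n : ℍ[ℝ]) (hn_re : n.re = 0) (hn_norm : ‖n‖ = 1)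
    (α : ℝ) (hα0 : 0 ≤ α) (hαπ : α < Real.pi)
    (q C : ℍ[ℝ])
    (hq : q = NormedSpace.exp ((α / 2) • n))
    (hC : C = ∫ x, star (q * v x * star q) * v x)
    (φ : ℝ) (hφ : φ = Real.arccos (C.re / ‖C‖))
    (p : ℍ[ℝ])
    (hp₁ : C.im ≠ 0 → p = ((Real.cos (φ / 2) : ℝ) : ℍ[ℝ])
        + Real.sin (φ / 2) • (‖C.im‖⁻¹ • C.im))
    (hp₀ : C.im = 0 → p = 1) :
    Real.cos (α / 2) ≤ (star p * q).re := by
  set c : ℝ := Real.cos (α / 2) with hc_def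
  set s : ℝ := Real.sin (α / 2) with hs_def
  have hc_pos : 0 < c := Real.cos_pos_of_mem_Ioo
    ⟨by nlinarith [Real.pi_pos], by linarith⟩
  have hs_nonneg : 0 ≤ s := Real.sin_nonneg_of_nonneg_of_le_pi (by linarith) (by linarith)
  have hn_norm2 : n.imI ^ 2 + n.imJ ^ 2 + n.imK ^ 2 = 1 := by
    have h1 := Quaternion.normSq_eq_norm_mul_self n
    rw [Quaternion.normSq_def', hn_norm, hn_re] at h1
    nlinarith [h1]
  have hc2s2 : c ^ 2 + s ^ 2 = 1 := by
    have := Real.sin_sq_add_cos_sq (α / 2); linarith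
  -- q in closed form
  have hq2 : q = (c : ℍ[ℝ]) + s • n := by
    rw [hq]
    have h1 : ((α / 2) • n).re = 0 := by simp [hn_re]
    rw [Quaternion.exp_of_re_eq_zero _ h1]
    have h2 : ‖(α / 2) • n‖ = α / 2 := by
      rw [norm_smul, hn_norm, Real.norm_eq_abs, abs_of_nonneg (by linarith), mul_one]
    rw [h2]
    rcases eq_or_ne α 0 with h | h
    · simp [h, hc_def, hs_def]
    · rw [smul_smul, div_mul_cancel₀]
      exact div_ne_zero h two_ne_zero
  -- the integrand
  have hqnorm : ‖q‖ = 1 := by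
    have h1 : Quaternion.normSq q = 1 := by
      rw [hq2, Quaternion.normSq_def']
      simp only [Quaternion.re_add, Quaternion.imI_add, Quaternion.imJ_add, Quaternion.imK_add,
        Quaternion.re_coe, Quaternion.imI_coe, Quaternion.imJ_coe, Quaternion.imK_coe,
        Quaternion.re_smul, Quaternion.imI_smul, Quaternion.imJ_smul, Quaternion.imK_smul,
        hn_re, smul_eq_mul]
      nlinarith [hn_norm2, hc2s2]
    have h2 := Quaternion.normSq_eq_norm_mul_self q
    nlinarith [norm_nonneg q, h2, h1]
  have hf_norm : ∀ x, ‖star (q * v x * star q) * v x‖ = ‖v x‖ ^ 2 := by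
    intro x
    rw [norm_mul, Quaternion.norm_star, norm_mul, norm_mul, hqnorm, Quaternion.norm_star, hqnorm]
    ring
  have hP1 : ∀ x, (inner ℝ (star (q * v x * star q) * v x) q : ℝ) = c * ‖v x‖ ^ 2 := by
    intro x
    rw [hq2]
    exact aux_inner_fq n (v x) hn_re hn_norm2 (hre x) c s hc2s2
  -- integrability
  have hv2_int : Integrable (fun x => ‖v x‖ ^ 2) := by
    by_contra h
    rw [integral_undef h] at hnorm
    norm_num at hnorm
  have hf_meas : Measurable fun x => star (q * v x * star q) * v x := by
    have hg : Continuous fun w : ℍ[ℝ] => star (q * w * star q) * w :=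
      (((continuous_const.mul continuous_id).mul continuous_const).star).mul continuous_id
    exact hg.measurable.comp hmeas
  have hf_int : Integrable fun x => star (q * v x * star q) * v x := by
    refine Integrable.mono' hv2_int hf_meas.aestronglyMeasurable ?_
    filter_upwards with x
    rw [hf_norm x]
  -- the key integral identities
  have hCq : (inner ℝ C q : ℝ) = c := by
    have h1 := integral_inner (𝕜 := ℝ) hf_int q
    have h2 : ∀ x, (inner ℝ q (star (q * v x * star q) * v x) : ℝ) = c * ‖v x‖ ^ 2 := by
      intro x; rw [real_inner_comm]; exact hP1 x
    rw [hC, real_inner_comm, ← h1]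
    simp_rw [h2]
    rw [integral_const_mul, hnorm, mul_one]
  have hCnorm : ‖C‖ ≤ 1 := by
    rw [hC]
    calc ‖∫ x, star (q * v x * star q) * v x‖
        ≤ ∫ x, ‖star (q * v x * star q) * v x‖ := norm_integral_le_integral_norm _
    _ = ∫ x, ‖v x‖ ^ 2 := by simp_rw [hf_norm]
    _ = 1 := hnorm
  -- abbreviations
  set R : ℝ := C.re with hR_def
  set N : ℝ := ‖C‖ with hN_def
  set K : ℝ := ‖C.im‖ with hK_def
  set E : ℝ := C.imI * n.imI + C.imJ * n.imJ + C.imK * n.imK with hE_def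
  have hNsq : N ^ 2 = R ^ 2 + K ^ 2 := by
    have h1 := Quaternion.normSq_eq_norm_mul_self C
    have h2 := Quaternion.normSq_eq_norm_mul_self C.im
    rw [Quaternion.normSq_def'] at h1 h2
    simp only [Quaternion.re_im, Quaternion.imI_im, Quaternion.imJ_im, Quaternion.imK_im] at h2
    nlinarith [h1, h2]
  have hEs : c * R + s * E = c := by
    have h1 := aux_inner_Cq C n hn_re c s
    rw [← hq2, hCq] at h1
    rw [← hE_def, ← hR_def] at h1
    linarith [h1]
  -- case analysis
  rcases eq_or_ne C.im 0 with him | him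
  · rw [hp₀ him, star_one, one_mul, hq2]
    simp [hn_re]
  · -- main case
    have hK_pos : 0 < K := norm_pos_iff.mpr him
    have hN_pos : 0 < N := by nlinarith [hNsq, norm_nonneg C]
    have hRN : -N ≤ R ∧ R ≤ N := by constructor <;> nlinarith [hNsq]
    have hcosφ : Real.cos φ = R / N := by
      rw [hφ]
      exact Real.cos_arccos
        (by rw [neg_le, ← neg_div]; exact div_le_one_of_le₀ (by linarith [hRN.1]) hN_pos.le)
        (div_le_one_of_le₀ hRN.2 hN_pos.le)
    have hsinφ : Real.sin φ = K / N := by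
      rw [hφ, Real.sin_arccos]
      have h1 : 1 - (R / N) ^ 2 = (K / N) ^ 2 := by
        field_simp
        nlinarith [hNsq]
      rw [h1, Real.sqrt_sq (by positivity)]
    have hφ0 : 0 ≤ φ := hφ ▸ Real.arccos_nonneg _
    have hφπ : φ ≤ Real.pi := hφ ▸ Real.arccos_le_pi _
    set cφ : ℝ := Real.cos (φ / 2) with hcφ_def
    set sφ : ℝ := Real.sin (φ / 2) with hsφ_def
    have hcφ0 : 0 ≤ cφ := Real.cos_nonneg_of_mem_Icc ⟨by linarith, by linarith⟩
    have hsφ0 : 0 ≤ sφ := Real.sin_nonneg_of_nonneg_of_le_pi (by linarith) (by linarith)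
    have hsin2 : 2 * sφ * cφ = K / N := by
      rw [← hsinφ, show φ = 2 * (φ / 2) by ring, Real.sin_two_mul]
    have hcφsq : 2 * cφ ^ 2 * N = N + R := by
      have h1 := Real.cos_sq (φ / 2)
      rw [show 2 * (φ / 2) = φ by ring, hcosφ] at h1
      have h2 : 2 * cφ ^ 2 - 1 = R / N := by rw [hcφ_def]; linarith [h1]
      calc 2 * cφ ^ 2 * N = (2 * cφ ^ 2 - 1) * N + N := by ring
      _ = (R / N) * N + N := by rw [h2]
      _ = N + R := by rw [div_mul_cancel₀ _ (ne_of_gt hN_pos)]; ring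
    have hre_spq : (star p * q).re = cφ * c + sφ * s * (K⁻¹ * E) := by
      rw [hp₁ him, hq2]
      exact aux_re_spq C n hn_re c s cφ sφ
    rw [hre_spq]
    exact aux_final c s R N K E cφ sφ hc_pos hs_nonneg hCnorm hN_pos hK_pos hNsq hEs
      hcφ0 hsφ0 (Real.cos_le_one _) hsin2 hcφsq
end

section
/- Let v : ℝ^m → ℍ be a measurable, square integrable vector field (re (v x) = 0 for all x) with ∫ ‖v∥ x‖² dx > 0, where v∥ x = v x − ⟪v x, n⟫ • n for a purely imaginary unit quaternion n. Let α ∈ [0, π), q = exp((α/2) • n), and C = ∫ star (q * v x * star q) * v x dx. Then im C = 0 if and only if α = 0; i.e., the correlation of the rotated field with the original is real precisely when there is no rotational misalignment. -/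
open Quaternion MeasureTheory

lemma key (n w : ℍ[ℝ]) (hn : n.re = 0) (hw : w.re = 0)
    (hn1 : n.imI^2 + n.imJ^2 + n.imK^2 = 1) (c s : ℝ) :
    (inner ℝ (star ((↑c + s • n) * w * star (↑c + s • n)) * w) n : ℝ)
      = 2 * s * c * ‖w - (inner ℝ w n : ℝ) • n‖ ^ 2 := by
  rw [← real_inner_self_eq_norm_sq]
  simp only [inner_def, Quaternion.re_mul, Quaternion.re_add, Quaternion.imI_add,
    Quaternion.imJ_add, Quaternion.imK_add, Quaternion.re_smul, Quaternion.imI_smul,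
    Quaternion.imJ_smul, Quaternion.imK_smul, Quaternion.re_star, Quaternion.imI_star,
    Quaternion.imJ_star, Quaternion.imK_star, Quaternion.imI_mul, Quaternion.imJ_mul,
    Quaternion.imK_mul, Quaternion.re_coe, Quaternion.imI_coe, Quaternion.imJ_coe,
    Quaternion.imK_coe, Quaternion.re_sub, Quaternion.imI_sub, Quaternion.imJ_sub,
    Quaternion.imK_sub, hn, hw, smul_eq_mul]
  linear_combination (2*c*s*w.imK^2 + 2*c*s*w.imJ^2 + 2*c*s*w.imI^2
    - 2*c*s*n.imK^2*w.imK^2 - 4*c*s*n.imJ*n.imK*w.imJ*w.imK - 2*c*s*n.imJ^2*w.imJ^2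
    - 4*c*s*n.imI*n.imK*w.imI*w.imK - 4*c*s*n.imI*n.imJ*w.imI*w.imJ
    - 2*c*s*n.imI^2*w.imI^2) * hn1

noncomputable def coeCLM : ℝ →L[ℝ] ℍ[ℝ] :=
  { toLinearMap := Algebra.linearMap ℝ ℍ[ℝ], cont := continuous_algebraMap ℝ ℍ[ℝ] }

lemma coeCLM_apply (r : ℝ) : coeCLM r = (r : ℍ[ℝ]) := rfl

theorem correlation_real_iff_no_rotation
    {m : ℕ} (v : EuclideanSpace ℝ (Fin m) → ℍ[ℝ])
    (hmeas : Measurable v)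
    (hre : ∀ x, (v x).re = 0)
    (hsq : Integrable (fun x => ‖v x‖ ^ 2))
    (n : ℍ[ℝ]) (hn_re : n.re = 0) (hn_norm : ‖n‖ = 1)
    (hpos : 0 < ∫ x, ‖v x - (inner ℝ (v x) n : ℝ) • n‖ ^ 2)
    (α : ℝ) (hα0 : 0 ≤ α) (hαπ : α < Real.pi) :
    (∫ x, star (NormedSpace.exp ((α / 2) • n) * v x
        * star (NormedSpace.exp ((α / 2) • n))) * v x).im = 0 ↔ α = 0 := by
  set q : ℍ[ℝ] := NormedSpace.exp ((α / 2) • n) with hqdef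
  constructor
  · intro him
    by_contra hne
    have hαpos : 0 < α := lt_of_le_of_ne hα0 (Ne.symm hne)
    have hre_smul : ((α / 2) • n).re = 0 := by simp [Quaternion.re_smul, hn_re]
    have hnorm_smul : ‖(α / 2) • n‖ = α / 2 := by
      rw [norm_smul, hn_norm, mul_one, Real.norm_eq_abs, abs_of_pos (by linarith)]
    have hq_eq : q = ↑(Real.cos (α / 2)) + Real.sin (α / 2) • n := by
      rw [hqdef, Quaternion.exp_of_re_eq_zero _ hre_smul, hnorm_smul, smul_smul,
        div_mul_cancel₀]
      linarith
    have hq_norm : ‖q‖ = 1 := by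
      rw [hqdef, Quaternion.norm_exp, hre_smul, NormedSpace.exp_zero, norm_one]
    -- measurability and integrability
    have hm : Measurable fun x => star (q * v x * star q) * v x := by
      apply Measurable.mul _ hmeas
      exact continuous_star.measurable.comp
        (((continuous_const.mul continuous_id).mul continuous_const).measurable.comp hmeas)
    have hbound : ∀ x, ‖star (q * v x * star q) * v x‖ ≤ ‖v x‖ ^ 2 := by
      intro x
      rw [norm_mul, _root_.norm_star, norm_mul, norm_mul, _root_.norm_star, hq_norm, one_mul, mul_one, sq]
    have hf : Integrable (fun x => star (q * v x * star q) * v x) :=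
      hsq.mono' hm.aestronglyMeasurable (Filter.Eventually.of_forall hbound)
    -- unit axis in coordinates
    have hnormSq : normSq n = 1 := by
      have h := Quaternion.normSq_eq_norm_mul_self (a := n)
      rw [hn_norm, one_mul] at h
      exact h
    have hn1 : n.imI ^ 2 + n.imJ ^ 2 + n.imK ^ 2 = 1 := by
      rw [Quaternion.normSq_def', hn_re] at hnormSq
      nlinarith [hnormSq]
    -- pointwise identity
    have hsin2 : 2 * Real.sin (α / 2) * Real.cos (α / 2) = Real.sin α := by
      rw [← Real.sin_two_mul]
      congr 1
      ring
    have hpt : ∀ x, (inner ℝ (star (q * v x * star q) * v x) n : ℝ)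
        = Real.sin α * ‖v x - (inner ℝ (v x) n : ℝ) • n‖ ^ 2 := by
      intro x
      rw [hq_eq, key n (v x) hn_re (hre x) hn1, hsin2]
    -- integral identity
    have hInt : (inner ℝ (∫ x, star (q * v x * star q) * v x) n : ℝ)
        = Real.sin α * ∫ x, ‖v x - (inner ℝ (v x) n : ℝ) • n‖ ^ 2 := by
      have hpt' : ∀ x, (inner ℝ n (star (q * v x * star q) * v x) : ℝ)
          = Real.sin α * ‖v x - (inner ℝ (v x) n : ℝ) • n‖ ^ 2 := by
        intro x; rw [real_inner_comm]; exact hpt x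
      rw [real_inner_comm, ← integral_inner hf n]
      simp_rw [hpt']
      rw [integral_const_mul]
    -- with him, the inner product vanishes
    set I : ℍ[ℝ] := ∫ x, star (q * v x * star q) * v x with hIdef
    have hI0 : (inner ℝ I n : ℝ) = 0 := by
      have hsplit : I = (I.re : ℍ[ℝ]) + I.im := (Quaternion.re_add_im I).symm
      rw [hsplit, inner_add_left, him, inner_zero_left, add_zero]
      simp [inner_def, Quaternion.re_mul, hn_re]
    have hsinpos : 0 < Real.sin α := Real.sin_pos_of_pos_of_lt_pi hαpos hαπ
    rw [hI0] at hInt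
    nlinarith [mul_pos hsinpos hpos]
  · intro h
    subst h
    have h0 : ((0:ℝ) / 2) • n = 0 := by simp
    have heq : (fun x => star (q * v x * star q) * v x)
        = fun x => coeCLM (‖v x‖ ^ 2) := by
      funext x
      rw [coeCLM_apply, hqdef, h0, NormedSpace.exp_zero, one_mul, star_one, mul_one,
        Quaternion.star_mul_self, Quaternion.normSq_eq_norm_mul_self, ← sq]
    rw [heq, ContinuousLinearMap.integral_comp_comm coeCLM hsq, coeCLM_apply,
      Quaternion.im_coe]
end

section
/- (Example, field (10) of the paper.) Define v : ℝ³ → ℍ by v x = i if x ∈ (−1,1)³ and x₁ ≥ 0, v x = j if x ∈ (−1,1)³ and x₁ < 0, and v x = 0 otherwise, where i, j, k are the imaginary quaternion units. Take the outer rotation by angle π/2 about the axis j, i.e. q = exp((π/4) • j), and let C = ∫ star (q * v x * star q) * v x dx be the geometric cross correlation at the origin. Then re C = 4 and ‖im C‖ = 4, so the detected rotation angle is Real.arccos (re C / ‖C‖) = π/4 — only half the true rotation angle π/2. -/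
open Quaternion MeasureTheory

/-- The imaginary quaternion unit `i` (corresponding to `e₁`). -/
def iQ : ℍ[ℝ] := ⟨0, 1, 0, 0⟩

/-- The imaginary quaternion unit `j` (corresponding to `e₂`). -/
def jQ : ℍ[ℝ] := ⟨0, 0, 1, 0⟩

/-- The vector field (10) of the paper: `e₁` on the half `x₁ ≥ 0` of the open
cube `(-1,1)³`, `e₂` on the half `x₁ < 0`, and `0` outside the cube. -/
noncomputable def vField10 (x : EuclideanSpace ℝ (Fin 3)) : ℍ[ℝ] :=
  open Classical in
  if (∀ i, x i ∈ Set.Ioo (-1 : ℝ) 1) then (if 0 ≤ x 0 then iQ else jQ) else 0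

/-- The rotor of the outer rotation by `π/2` about the axis `j`. -/
noncomputable def rotor10 : ℍ[ℝ] := NormedSpace.exp ((Real.pi / 4) • jQ)

/-- The geometric cross correlation at the origin of the rotated copy of the
field (10) with the original field. -/
noncomputable def corr10 : ℍ[ℝ] :=
  ∫ x, star (rotor10 * vField10 x * star rotor10) * vField10 x

/- ### Auxiliary lemmas -/

lemma norm_jQ : ‖jQ‖ = 1 := by
  have h2 : Quaternion.normSq jQ = 1 := by rw [Quaternion.normSq_def']; simp [jQ]
  have := Quaternion.normSq_eq_norm_mul_self jQ
  rw [h2] at this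
  nlinarith [norm_nonneg jQ]

lemma rotor10_eq : rotor10 = ⟨Real.sqrt 2 / 2, 0, Real.sqrt 2 / 2, 0⟩ := by
  have h0 : ((Real.pi / 4) • jQ).re = 0 := by rw [Quaternion.re_smul]; simp [jQ]
  rw [rotor10, Quaternion.exp_of_re_eq_zero _ h0]
  have hn : ‖(Real.pi / 4) • jQ‖ = Real.pi / 4 := by
    rw [norm_smul, norm_jQ, mul_one, Real.norm_eq_abs, abs_of_pos (by positivity)]
  rw [hn, smul_smul, div_mul_cancel₀ _ (by positivity : Real.pi / 4 ≠ 0),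
    Real.cos_pi_div_four, Real.sin_pi_div_four]
  ext <;> simp [← Quaternion.coe_div] <;> simp [jQ]

lemma key1 : star (rotor10 * iQ * star rotor10) * iQ = jQ := by
  have hs : Real.sqrt 2 * Real.sqrt 2 = 2 := Real.mul_self_sqrt (by norm_num)
  ext <;> simp [Quaternion.re_mul, Quaternion.imI_mul, Quaternion.imJ_mul,
    Quaternion.imK_mul] <;> simp [iQ, jQ, rotor10_eq] <;> nlinarith [hs]

lemma key2 : star (rotor10 * jQ * star rotor10) * jQ = 1 := by
  have hs : Real.sqrt 2 * Real.sqrt 2 = 2 := Real.mul_self_sqrt (by norm_num)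
  ext <;> simp [Quaternion.re_mul, Quaternion.imI_mul, Quaternion.imJ_mul,
    Quaternion.imK_mul] <;> simp [jQ, rotor10_eq] <;> nlinarith [hs]

noncomputable def sA : Fin 3 → Set ℝ := ![Set.Ico 0 1, Set.Ioo (-1) 1, Set.Ioo (-1) 1]
noncomputable def sB : Fin 3 → Set ℝ := ![Set.Ioo (-1) 0, Set.Ioo (-1) 1, Set.Ioo (-1) 1]

def A : Set (EuclideanSpace ℝ (Fin 3)) :=
  (MeasurableEquiv.toLp 2 (Fin 3 → ℝ)).symm ⁻¹' (Set.univ.pi sA)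
def B : Set (EuclideanSpace ℝ (Fin 3)) :=
  (MeasurableEquiv.toLp 2 (Fin 3 → ℝ)).symm ⁻¹' (Set.univ.pi sB)

lemma measA' : MeasurableSet (Set.univ.pi sA) :=
  MeasurableSet.univ_pi (fun i => by fin_cases i <;> simp [sA])
lemma measB' : MeasurableSet (Set.univ.pi sB) :=
  MeasurableSet.univ_pi (fun i => by fin_cases i <;> simp [sB])

lemma measA : MeasurableSet A :=
  measA'.preimage (MeasurableEquiv.toLp 2 (Fin 3 → ℝ)).symm.measurable
lemma measB : MeasurableSet B :=
  measB'.preimage (MeasurableEquiv.toLp 2 (Fin 3 → ℝ)).symm.measurable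

lemma volA : volume A = ENNReal.ofReal 4 := by
  rw [A, (EuclideanSpace.volume_preserving_symm_measurableEquiv_toLp (Fin 3)).measure_preimage
    measA'.nullMeasurableSet, volume_pi_pi, Fin.prod_univ_three]
  norm_num [sA, Matrix.cons_val_two, Real.volume_Ico, Real.volume_Ioo, ← ENNReal.ofReal_mul]

lemma volB : volume B = ENNReal.ofReal 4 := by
  rw [B, (EuclideanSpace.volume_preserving_symm_measurableEquiv_toLp (Fin 3)).measure_preimage
    measB'.nullMeasurableSet, volume_pi_pi, Fin.prod_univ_three]
  norm_num [sB, Matrix.cons_val_two, Real.volume_Ioo, ← ENNReal.ofReal_mul]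

lemma equiv_apply (y : EuclideanSpace ℝ (Fin 3)) (i : Fin 3) :
    (MeasurableEquiv.toLp 2 (Fin 3 → ℝ)).symm y i = y i := rfl

lemma memA (x : EuclideanSpace ℝ (Fin 3)) :
    x ∈ A ↔ (∀ i, x i ∈ Set.Ioo (-1:ℝ) 1) ∧ 0 ≤ x 0 := by
  simp only [A, Set.mem_preimage, Set.mem_pi, Set.mem_univ, forall_true_left, equiv_apply]
  constructor
  · intro h
    have h0 := h 0; have h1 := h 1; have h2 := h 2
    simp [sA] at h0 h1 h2
    exact ⟨fun i => by fin_cases i <;> simp_all <;> (try constructor) <;> linarith, h0.1⟩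
  · rintro ⟨h, h0⟩
    intro i; fin_cases i <;> simp [sA] <;>
      first
      | exact ⟨h0, (h 0).2⟩
      | exact ⟨(h 1).1, (h 1).2⟩
      | exact ⟨(h 2).1, (h 2).2⟩

lemma memB (x : EuclideanSpace ℝ (Fin 3)) :
    x ∈ B ↔ (∀ i, x i ∈ Set.Ioo (-1:ℝ) 1) ∧ ¬ (0 ≤ x 0) := by
  simp only [B, Set.mem_preimage, Set.mem_pi, Set.mem_univ, forall_true_left, equiv_apply]
  constructor
  · intro h
    have h0 := h 0; have h1 := h 1; have h2 := h 2
    simp [sB] at h0 h1 h2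
    refine ⟨fun i => by fin_cases i <;> simp_all <;> (try constructor) <;> linarith,
      by push_neg; linarith [h0.2]⟩
  · rintro ⟨h, h0⟩
    push_neg at h0
    intro i; fin_cases i <;> simp [sB] <;>
      first
      | exact ⟨(h 0).1, h0⟩
      | exact ⟨(h 1).1, (h 1).2⟩
      | exact ⟨(h 2).1, (h 2).2⟩

lemma integrand_eq (x : EuclideanSpace ℝ (Fin 3)) :
    star (rotor10 * vField10 x * star rotor10) * vField10 x
      = A.indicator (fun _ => jQ) x + B.indicator (fun _ => (1 : ℍ[ℝ])) x := by
  by_cases hc : ∀ i, x i ∈ Set.Ioo (-1 : ℝ) 1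
  · by_cases h0 : 0 ≤ x 0
    · rw [vField10, if_pos hc, if_pos h0, key1,
        Set.indicator_of_mem ((memA x).2 ⟨hc, h0⟩),
        Set.indicator_of_notMem (fun hB => ((memB x).1 hB).2 h0), add_zero]
    · rw [vField10, if_pos hc, if_neg h0, key2,
        Set.indicator_of_notMem (fun hA => h0 ((memA x).1 hA).2),
        Set.indicator_of_mem ((memB x).2 ⟨hc, h0⟩), zero_add]
  · rw [vField10, if_neg hc,
      Set.indicator_of_notMem (fun hA => hc ((memA x).1 hA).1),
      Set.indicator_of_notMem (fun hB => hc ((memB x).1 hB).1)]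
    simp

lemma intA : Integrable (A.indicator (fun _ => jQ)) volume :=
  (integrable_indicator_iff measA).2 (integrableOn_const (by
    rw [volA]; exact ENNReal.ofReal_ne_top))

lemma intB : Integrable (B.indicator (fun _ => (1 : ℍ[ℝ]))) volume :=
  (integrable_indicator_iff measB).2 (integrableOn_const (by
    rw [volB]; exact ENNReal.ofReal_ne_top))

lemma corr10_eq : corr10 = ⟨4, 0, 4, 0⟩ := by
  have : corr10 = ∫ x, (A.indicator (fun _ => jQ) x + B.indicator (fun _ => (1 : ℍ[ℝ])) x) := by
    rw [corr10]; exact integral_congr_ae (Filter.Eventually.of_forall integrand_eq)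
  rw [this, integral_add intA intB, integral_indicator_const _ measA,
    integral_indicator_const _ measB, Measure.real, Measure.real, volA, volB, ENNReal.toReal_ofReal (by norm_num)]
  ext <;> simp <;> simp [jQ]

/-- Example, field (10): the geometric correlation with the copy rotated by
`π/2` about the axis `j` has scalar part `4` and bivector part of norm `4`,
hence detects only half the rotation angle, namely `π/4`. -/
theorem example_field10_detects_half_angle :
    corr10.re = 4 ∧ ‖corr10.im‖ = 4 ∧
      Real.arccos (corr10.re / ‖corr10‖) = Real.pi / 4 := by
  have hre : corr10.re = 4 := by rw [corr10_eq]
  have hs : Real.sqrt 2 * Real.sqrt 2 = 2 := Real.mul_self_sqrt (by norm_num)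
  have him : ‖corr10.im‖ = 4 := by
    have h1 : Quaternion.normSq corr10.im = 16 := by
      rw [Quaternion.normSq_def']; norm_num [Quaternion.im, corr10_eq]
    have h2 := Quaternion.normSq_eq_norm_mul_self corr10.im
    rw [h1] at h2
    nlinarith [norm_nonneg corr10.im]
  have hnorm : ‖corr10‖ = 4 * Real.sqrt 2 := by
    have h1 : Quaternion.normSq corr10 = 32 := by
      rw [Quaternion.normSq_def']; norm_num [corr10_eq]
    have h2 := Quaternion.normSq_eq_norm_mul_self corr10
    rw [h1] at h2
    nlinarith [norm_nonneg corr10, Real.sqrt_nonneg 2]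
  refine ⟨hre, him, ?_⟩
  rw [hre, hnorm]
  have h2pos : (0:ℝ) < Real.sqrt 2 := Real.sqrt_pos.2 (by norm_num)
  have : (4:ℝ) / (4 * Real.sqrt 2) = Real.sqrt 2 / 2 := by
    rw [div_eq_div_iff (by positivity) (by norm_num)]
    nlinarith
  rw [this, ← Real.cos_pi_div_four, Real.arccos_cos (by positivity)
    (by linarith [Real.pi_pos])]
end
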